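/- arXiv:0905.1064 — 2 statements merged into one kernel-verified Lean document; each statement's English description precedes it below -/
import Mathlib

section
/- Let G be a multigraph and k a positive integer, and let C₁ and C₂ be two distinct equivalence classes of the relation R^k on the vertices of G. Then any family of pairwise edge-disjoint paths in G, each path having one endpoint in C₁ and the other endpoint in C₂, has cardinality at most k − 1. -/
/-- A multigraph on vertex type `V` with edge type `E`: each edge is assigned
an unordered pair of endpoints (parallel edges and loops are allowed). -/
structure Multigraph (V : Type) (E : Type) where
  ends : E → Sym2 V

namespace Multigraph

variable {V E : Type}

/-- Walks in a multigraph, recorded as the sequence of traversed edges. -/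
inductive Walk (G : Multigraph V E) : V → V → Type
  | nil (v : V) : Walk G v v
  | cons {u v w : V} (e : E) (he : G.ends e = s(u, v)) (p : Walk G v w) : Walk G u w

/-- The list of edges traversed by a walk. -/
def Walk.edges {G : Multigraph V E} : ∀ {u v : V}, G.Walk u v → List E
  | _, _, .nil _ => []
  | _, _, .cons e _ p => e :: p.edges

/-- The list of vertices visited by a walk, in order. -/
def Walk.support {G : Multigraph V E} : ∀ {u v : V}, G.Walk u v → List V
  | _, _, .nil v => [v]
  | u, _, .cons _ _ p => u :: p.support

/-- A path is a walk visiting no vertex twice. -/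
def Walk.IsPath {G : Multigraph V E} {u v : V} (p : G.Walk u v) : Prop :=
  p.support.Nodup

/-- There exist `k` pairwise edge-disjoint `u`–`v` paths in `G`. -/
def HasEdgeDisjointPaths (G : Multigraph V E) (k : ℕ) (u v : V) : Prop :=
  ∃ f : Fin k → G.Walk u v, (∀ i, (f i).IsPath) ∧
    ∀ i j, i ≠ j → ∀ e, e ∈ (f i).edges → e ∉ (f j).edges

/-- `G` is `k`-edge-connected: it has more than one vertex and any two distinct
vertices are joined by at least `k` pairwise edge-disjoint paths. -/
def EdgeConnected (G : Multigraph V E) (k : ℕ) : Prop :=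
  (∃ u v : V, u ≠ v) ∧ ∀ u v : V, u ≠ v → G.HasEdgeDisjointPaths k u v

/-- Deletion of the edge `e₀`. -/
def deleteEdge (G : Multigraph V E) (e₀ : E) : Multigraph V {e : E // e ≠ e₀} :=
  ⟨fun e => G.ends e.1⟩

/-- `G` is an edge-minimal `k`-edge-connected multigraph. -/
def EdgeMinimal (G : Multigraph V E) (k : ℕ) : Prop :=
  G.EdgeConnected k ∧ ∀ e₀ : E, ¬ (G.deleteEdge e₀).EdgeConnected k

/-- The unordered pair of endpoints of an edge, as a multiset. -/
def _root_.Sym2.toMset {α : Type*} : Sym2 α → Multiset α :=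
  Sym2.lift ⟨fun a b => {a, b}, fun a b => Multiset.cons_swap a b 0⟩

open Classical in
/-- The degree of a vertex: the number of edge-endpoints at `v`, counting
parallel edges with multiplicity (and loops twice). -/
noncomputable def degree (G : Multigraph V E) [Fintype E] (v : V) : ℕ :=
  ∑ e : E, Multiset.count v (G.ends e).toMset

/-- The relation `R^k`: `v₁ R^k v₂` iff `v₁ = v₂` or there are `k` pairwise
edge-disjoint paths between `v₁` and `v₂`. -/
def Rel (G : Multigraph V E) (k : ℕ) (v₁ v₂ : V) : Prop :=
  v₁ = v₂ ∨ G.HasEdgeDisjointPaths k v₁ v₂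

/-- `C` is an equivalence class of the relation `r`. -/
def IsClassOf {V : Type} (r : V → V → Prop) (C : Set V) : Prop :=
  ∃ v : V, C = {u : V | r u v}

end Multigraph

section WALKS
namespace Multigraph

variable {V E : Type} {G : Multigraph V E}

def Walk.append {G : Multigraph V E} : ∀ {u v w : V}, G.Walk u v → G.Walk v w → G.Walk u w
  | _, _, _, .nil _, q => q
  | _, _, _, .cons e he p, q => .cons e he (p.append q)

@[simp] lemma Walk.edges_append : ∀ {u v w : V} (p : G.Walk u v) (q : G.Walk v w),
    (p.append q).edges = p.edges ++ q.edges
  | _, _, _, .nil _, q => rfl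
  | _, _, _, .cons e he p, q => by
      simp [Walk.append, Walk.edges, Walk.edges_append p q]

def Walk.reverse {G : Multigraph V E} : ∀ {u v : V}, G.Walk u v → G.Walk v u
  | _, _, .nil v => .nil v
  | _, _, .cons e he p => p.reverse.append (.cons e (by rw [he, Sym2.eq_swap]) (.nil _))

@[simp] lemma Walk.edges_reverse : ∀ {u v : V} (p : G.Walk u v),
    p.reverse.edges = p.edges.reverse
  | _, _, .nil _ => rfl
  | _, _, .cons e he p => by
      simp [Walk.reverse, Walk.edges, Walk.edges_reverse p]

@[simp] lemma Walk.support_ne_nil : ∀ {u v : V} (p : G.Walk u v), p.support ≠ []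
  | _, _, .nil _ => by simp [Walk.support]
  | _, _, .cons e he p => by simp [Walk.support]

lemma Walk.support_eq_cons : ∀ {u v : V} (p : G.Walk u v), p.support = u :: p.support.tail
  | _, _, .nil _ => rfl
  | _, _, .cons e he p => rfl

@[simp] lemma Walk.mem_support_self {u v : V} (p : G.Walk u v) : u ∈ p.support := by
  rw [p.support_eq_cons]; exact List.mem_cons_self

lemma Walk.end_mem_support : ∀ {u v : V} (p : G.Walk u v), v ∈ p.support
  | _, _, .nil _ => by simp [Walk.support]
  | _, _, .cons e he p => by
      simp [Walk.support]; exact .inr p.end_mem_support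

lemma Walk.support_append : ∀ {u v w : V} (p : G.Walk u v) (q : G.Walk v w),
    (p.append q).support = p.support ++ q.support.tail
  | _, _, _, .nil v, q => by
      show q.support = [v] ++ q.support.tail
      rw [q.support_eq_cons]; rfl
  | _, _, _, .cons e he p, q => by
      show _ :: (p.append q).support = _
      rw [Walk.support_append p q]; rfl

@[simp] lemma Walk.support_reverse : ∀ {u v : V} (p : G.Walk u v),
    p.reverse.support = p.support.reverse
  | _, _, .nil v => rfl
  | u, _, .cons e he p => by
      show (p.reverse.append _).support = _
      rw [Walk.support_append, Walk.support_reverse p]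
      show _ ++ [u] = (u :: p.support).reverse
      simp

open Classical in
noncomputable def Walk.dropUntil {G : Multigraph V E} :
    ∀ {v w : V} (p : G.Walk v w) (u : V), u ∈ p.support → G.Walk u w
  | v, _, .nil _, u, h => by
      rw [show (Walk.nil v : G.Walk v v).support = [v] from rfl] at h
      simp at h; subst h; exact .nil _
  | v, w, .cons e he p, u, h =>
      if hx : v = u then hx ▸ .cons e he p
      else p.dropUntil u (by
        rw [show (Walk.cons e he p).support = v :: p.support from rfl] at h
        rcases List.mem_cons.1 h with h | h
        · exact absurd h.symm hx
        · exact h)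

lemma Walk.edges_dropUntil_subset : ∀ {v w : V} (p : G.Walk v w) (u : V) (h : u ∈ p.support),
    (p.dropUntil u h).edges ⊆ p.edges
  | v, _, .nil _, u, h => by
      intro e he
      simp only [Walk.dropUntil] at he
      revert he
      generalize_proofs hp
      exact fun he => by
        subst hp
        simpa [Walk.edges] using he
  | v, w, .cons e he p, u, h => by
      intro x hx
      by_cases hv : v = u
      · subst hv; simp only [Walk.dropUntil, dif_pos rfl] at hx; exact hx
      · simp only [Walk.dropUntil, dif_neg hv] at hx
        exact List.mem_cons.2 (.inr (p.edges_dropUntil_subset u _ hx))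

lemma Walk.support_dropUntil_suffix : ∀ {v w : V} (p : G.Walk v w) (u : V) (h : u ∈ p.support),
    (p.dropUntil u h).support <:+ p.support
  | v, _, .nil _, u, h => by
      simp only [Walk.dropUntil]
      generalize_proofs hp
      subst hp
      exact List.suffix_refl _
  | v, w, .cons e he p, u, h => by
      by_cases hv : v = u
      · subst hv; simp only [Walk.dropUntil, dif_pos rfl]; exact List.suffix_refl _
      · simp only [Walk.dropUntil, dif_neg hv]
        exact (p.support_dropUntil_suffix u _).trans (List.suffix_cons _ _)

open Classical in
noncomputable def Walk.bypass {G : Multigraph V E} : ∀ {u v : V}, G.Walk u v → G.Walk u v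
  | _, _, .nil v => .nil v
  | _, _, .cons e he p =>
      let p' := p.bypass
      if hs : _ ∈ p'.support then p'.dropUntil _ hs
      else .cons e he p'

lemma Walk.bypass_isPath : ∀ {u v : V} (p : G.Walk u v), p.bypass.IsPath
  | _, _, .nil v => by simp [Walk.bypass, Walk.IsPath, Walk.support]
  | u, _, .cons e he p => by
      simp only [Walk.bypass]
      split_ifs with hs
      · exact ((p.bypass.support_dropUntil_suffix u hs).sublist).nodup p.bypass_isPath
      · show (u :: p.bypass.support).Nodup
        exact List.nodup_cons.2 ⟨hs, p.bypass_isPath⟩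

lemma Walk.edges_bypass_subset : ∀ {u v : V} (p : G.Walk u v), p.bypass.edges ⊆ p.edges
  | _, _, .nil v => by simp [Walk.bypass]
  | u, _, .cons e he p => by
      simp only [Walk.bypass]
      split_ifs with hs
      · exact List.Subset.trans (List.Subset.trans (p.bypass.edges_dropUntil_subset u hs) p.edges_bypass_subset)
          (List.subset_cons_self _ _)
      · intro x hx
        rcases List.mem_cons.1 hx with h | h
        · exact h ▸ List.mem_cons_self
        · exact List.mem_cons.2 (.inr (p.edges_bypass_subset h))

end Multigraph
end WALKS
section CON
namespace Multigraph

variable {V E : Type} {G : Multigraph V E}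

/-- Connectivity within an allowed set of edges. -/
def Con (G : Multigraph V E) (S : Set E) (u v : V) : Prop :=
  ∃ p : G.Walk u v, ∀ e ∈ p.edges, e ∈ S

lemma Con.refl (S : Set E) (u : V) : G.Con S u u := ⟨.nil u, by simp [Walk.edges]⟩

lemma Con.symm {S : Set E} {u v : V} (h : G.Con S u v) : G.Con S v u := by
  obtain ⟨p, hp⟩ := h
  exact ⟨p.reverse, fun e he => hp e (by simpa using (Walk.edges_reverse p ▸ he : e ∈ p.edges.reverse))⟩

lemma Con.trans {S : Set E} {u v w : V} (h : G.Con S u v) (h' : G.Con S v w) : G.Con S u w := by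
  obtain ⟨p, hp⟩ := h; obtain ⟨q, hq⟩ := h'
  refine ⟨p.append q, fun e he => ?_⟩
  rw [Walk.edges_append] at he
  rcases List.mem_append.1 he with h | h
  · exact hp e h
  · exact hq e h

lemma Con.mono {S T : Set E} {u v : V} (hST : S ⊆ T) (h : G.Con S u v) : G.Con T u v := by
  obtain ⟨p, hp⟩ := h; exact ⟨p, fun e he => hST (hp e he)⟩

open Classical in
/-- Pigeonhole: among `k` pairwise edge-disjoint edge lists, one avoids any set of
fewer than `k` edges. -/
lemma exists_avoid {k : ℕ} (edg : Fin k → List E)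
    (hdisj : ∀ i j, i ≠ j → ∀ e, e ∈ edg i → e ∉ edg j)
    (F : Finset E) (hF : F.card < k) : ∃ i, ∀ e ∈ edg i, e ∉ F := by
  by_contra h
  push_neg at h
  choose g hg1 hg2 using h
  have hinj : Function.Injective g := by
    intro i j hij
    by_contra hne
    exact hdisj i j hne (g i) (hg1 i) (hij ▸ hg1 j)
  have : k ≤ F.card := by
    have := Finset.card_le_card_of_injOn (s := Finset.univ) g (fun i _ => hg2 i) hinj.injOn
    simpa using this
  omega

open Classical in
lemma rel_con {k : ℕ} {a b : V} (h : G.Rel k a b) :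
    ∃ B : Finset E, ∀ F : Finset E, F.card < k → G.Con ((B : Set E) \ (F : Set E)) a b := by
  rcases h with rfl | ⟨f, _, hdisj⟩
  · exact ⟨∅, fun F _ => Con.refl _ _⟩
  · refine ⟨Finset.univ.biUnion (fun i => (f i).edges.toFinset), fun F hF => ?_⟩
    obtain ⟨i, hi⟩ := exists_avoid (fun i => (f i).edges) hdisj F hF
    refine ⟨f i, fun e he => ⟨?_, hi e he⟩⟩
    simp only [Finset.coe_biUnion, Finset.coe_univ, Set.mem_iUnion, Set.mem_univ, Set.iUnion_true]
    exact ⟨i, by simp [he]⟩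

lemma rel_symm {k : ℕ} {a b : V} (h : G.Rel k a b) : G.Rel k b a := by
  rcases h with rfl | ⟨f, hpath, hdisj⟩
  · exact .inl rfl
  · refine .inr ⟨fun i => (f i).reverse, fun i => ?_, fun i j hij e he => ?_⟩
    · show (f i).reverse.support.Nodup
      rw [Walk.support_reverse]
      exact List.nodup_reverse.2 (hpath i)
    · rw [Walk.edges_reverse] at he ⊢
      simp only [List.mem_reverse] at he ⊢
      exact hdisj i j hij e he

end Multigraph
end CON
section FLOW
namespace Multigraph

variable {V E : Type}

open scoped Classical

/-- Contribution of an oriented edge to the excess at `w`. -/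
noncomputable def contrib : Option (V × V) → V → ℤ
  | none, _ => 0
  | some (a, b), w => (if a = w then 1 else 0) - (if b = w then 1 else 0)

@[simp] lemma contrib_none (w : V) : contrib (none : Option (V × V)) w = 0 := rfl

@[simp] lemma contrib_some (a b w : V) :
    contrib (some (a, b)) w = (if a = w then 1 else 0) - (if b = w then 1 else 0) := rfl

/-- Net outflow at a vertex. -/
noncomputable def excess (A : Finset E) (f : E → Option (V × V)) (w : V) : ℤ :=
  ∑ e ∈ A, contrib (f e) w

/-- `f` is an integer flow of value `j` from `u` to `v` supported on `A`. -/
structure IsFlow (G : Multigraph V E) (A : Finset E) (u v : V)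
    (f : E → Option (V × V)) (j : ℤ) : Prop where
  mem : ∀ e a b, f e = some (a, b) → e ∈ A ∧ G.ends e = s(a, b)
  conserve : ∀ w, w ≠ u → w ≠ v → excess A f w = 0
  val : excess A f u = j

/-- A list of oriented steps forming a chain from `a` to `b`. -/
inductive Steps : V → V → List (E × V × V) → Prop
  | nil (a : V) : Steps a a []
  | cons {b c : V} {L : List (E × V × V)} (e : E) (a : V) :
      Steps b c L → Steps a c ((e, a, b) :: L)

lemma Steps.sum_contrib {a c : V} {L : List (E × V × V)} (h : Steps a c L) (w : V) :
    (L.map (fun t => contrib (some (t.2.1, t.2.2)) w)).sum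
      = (if a = w then 1 else 0) - (if c = w then 1 else 0) := by
  induction h with
  | nil a => simp
  | cons e a h ih => rw [List.map_cons, List.sum_cons, ih, contrib_some]; ring

lemma Steps.append {a b c : V} {L M : List (E × V × V)}
    (h : Steps a b L) (h' : Steps b c M) : Steps a c (L ++ M) := by
  induction h with
  | nil a => exact h'
  | cons e a h ih => exact .cons e a (ih h')

lemma Steps.rev {a b : V} {L : List (E × V × V)} (h : Steps a b L) :
    Steps b a (L.reverse.map (fun t => (t.1, t.2.2, t.2.1))) := by
  induction h with
  | nil a => exact .nil a
  | @cons b' c L' e a h ih =>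
      simp only [List.reverse_cons, List.map_append, List.map_cons, List.map_nil]
      exact ih.append (.cons e b' (.nil a))

open Classical in
/-- Toggle the status of every edge on an (edge-nodup) list of steps. -/
noncomputable def toggleAll (f : E → Option (V × V)) (L : List (E × V × V)) :
    E → Option (V × V) :=
  fun e => if h : ∃ t ∈ L, t.1 = e then
      (if f e = none then some (h.choose.2.1, h.choose.2.2) else none)
    else f e

lemma toggleAll_not_mem {f : E → Option (V × V)} {L : List (E × V × V)} {e : E}
    (h : e ∉ L.map Prod.fst) : toggleAll f L e = f e := by
  rw [toggleAll, dif_neg]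
  rintro ⟨t, ht, rfl⟩
  exact h (List.mem_map.2 ⟨t, ht, rfl⟩)

lemma toggleAll_mem {f : E → Option (V × V)} {L : List (E × V × V)}
    (hnod : (L.map Prod.fst).Nodup) {e : E} {x y : V} (h : (e, x, y) ∈ L) :
    toggleAll f L e = if f e = none then some (x, y) else none := by
  have hex : ∃ t ∈ L, t.1 = e := ⟨(e, x, y), h, rfl⟩
  rw [toggleAll, dif_pos hex]
  have hc := hex.choose_spec
  have heq : hex.choose = (e, x, y) :=
    List.inj_on_of_nodup_map hnod hc.1 h (by rw [hc.2])
  rw [heq]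

/-- The step `t` is admissible for `f`: either an unused edge traversed forwards,
or a used edge traversed backwards. -/
def StepOK (G : Multigraph V E) (A : Finset E) (f : E → Option (V × V))
    (t : E × V × V) : Prop :=
  (t.1 ∈ A ∧ f t.1 = none ∧ G.ends t.1 = s(t.2.1, t.2.2)) ∨ f t.1 = some (t.2.2, t.2.1)

lemma StepOK.mem_A {G : Multigraph V E} {A : Finset E} {f : E → Option (V × V)}
    (hmem : ∀ e a b, f e = some (a, b) → e ∈ A ∧ G.ends e = s(a, b))
    {t : E × V × V} (h : StepOK G A f t) : t.1 ∈ A := by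
  rcases h with ⟨h, _, _⟩ | h
  · exact h
  · exact (hmem _ _ _ h).1

lemma excess_toggleAll {G : Multigraph V E} {A : Finset E} {f : E → Option (V × V)}
    {L : List (E × V × V)}
    (hmem : ∀ e a b, f e = some (a, b) → e ∈ A ∧ G.ends e = s(a, b))
    (hnod : (L.map Prod.fst).Nodup)
    (hok : ∀ t ∈ L, StepOK G A f t) (w : V) :
    excess A (toggleAll f L) w =
      excess A f w + (L.map (fun t => contrib (some (t.2.1, t.2.2)) w)).sum := by
  classical
  have key : ∑ e ∈ A, (contrib (toggleAll f L e) w - contrib (f e) w)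
      = (L.map (fun t => contrib (some (t.2.1, t.2.2)) w)).sum := by
    have hsub : (L.map Prod.fst).toFinset ⊆ A := by
      intro e he
      rw [List.mem_toFinset, List.mem_map] at he
      obtain ⟨t, ht, rfl⟩ := he
      exact (hok t ht).mem_A hmem
    rw [← Finset.sum_subset hsub (fun e _ he => by
      rw [toggleAll_not_mem (by simpa using he), sub_self])]
    rw [List.sum_toFinset _ hnod]
    rw [List.map_map]
    congr 1
    refine List.map_congr_left (fun t ht => ?_)
    obtain ⟨e, x, y⟩ := t
    show contrib (toggleAll f L e) w - contrib (f e) w = _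
    rcases hok _ ht with ⟨hA, hnone, hends⟩ | hsome
    · have hnone' : f e = none := hnone
      rw [toggleAll_mem hnod ht, if_pos hnone', hnone']
      simp
    · have hsome' : f e = some (y, x) := hsome
      rw [toggleAll_mem hnod ht, if_neg (by simp [hsome']), hsome']
      simp only [contrib_none, contrib_some]
      ring
  rw [excess, excess] at *
  rw [Finset.sum_sub_distrib] at key
  linarith [key]

end Multigraph
end FLOW
section FLOW2
namespace Multigraph

variable {V E : Type} {G : Multigraph V E}

open scoped Classical

lemma mem_map_fst {L : List (E × V × V)} {e : E} (h : e ∈ L.map Prod.fst) :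
    ∃ x y, (e, x, y) ∈ L := by
  rw [List.mem_map] at h
  obtain ⟨⟨e', x, y⟩, ht, rfl⟩ := h
  exact ⟨x, y, ht⟩

/-- Augmenting along a residual path increases the flow value by one. -/
lemma IsFlow.augment {A : Finset E} {u v : V} {f : E → Option (V × V)} {j : ℤ}
    (hf : IsFlow G A u v f j) (huv : u ≠ v) {L : List (E × V × V)}
    (hnod : (L.map Prod.fst).Nodup) (hok : ∀ t ∈ L, StepOK G A f t)
    (hsteps : Steps u v L) : IsFlow G A u v (toggleAll f L) (j + 1) := by
  have hexc : ∀ w, excess A (toggleAll f L) w =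
      excess A f w + ((if u = w then 1 else 0) - (if v = w then 1 else 0)) := by
    intro w
    rw [excess_toggleAll hf.mem hnod hok w, hsteps.sum_contrib]
  constructor
  · intro e a b heq
    by_cases hL : e ∈ L.map Prod.fst
    · obtain ⟨x, y, ht⟩ := mem_map_fst hL
      rw [toggleAll_mem hnod ht] at heq
      by_cases hn : f e = none
      · rw [if_pos hn] at heq
        rcases hok _ ht with ⟨hA, _, hends⟩ | hsome
        · simp only [Option.some.injEq, Prod.mk.injEq] at heq
          obtain ⟨rfl, rfl⟩ := heq
          exact ⟨hA, hends⟩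
        · rw [hn] at hsome; exact absurd hsome (by simp)
      · rw [if_neg hn] at heq; exact absurd heq (by simp)
    · rw [toggleAll_not_mem hL] at heq
      exact hf.mem e a b heq
  · intro w hwu hwv
    rw [hexc w, hf.conserve w hwu hwv, if_neg (fun h => hwu h.symm),
      if_neg (fun h => hwv h.symm)]
    ring
  · rw [hexc u, hf.val, if_pos rfl, if_neg (fun h => huv h.symm)]
    ring

/-- Removing the edges of an oriented `u`–`v` trail from a flow decreases
its value by one. -/
lemma IsFlow.remove {A : Finset E} {u v : V} {f : E → Option (V × V)} {j : ℤ}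
    (hf : IsFlow G A u v f j) (huv : u ≠ v) {L : List (E × V × V)}
    (hnod : (L.map Prod.fst).Nodup)
    (hval : ∀ t ∈ L, f t.1 = some (t.2.1, t.2.2)) (hsteps : Steps u v L) :
    IsFlow G A u v (toggleAll f (L.reverse.map (fun t => (t.1, t.2.2, t.2.1)))) (j - 1) := by
  set L' : List (E × V × V) := L.reverse.map (fun t => (t.1, t.2.2, t.2.1)) with hL'
  have hmapfst : L'.map Prod.fst = (L.map Prod.fst).reverse := by
    rw [hL', List.map_map, List.map_reverse]; rfl
  have hnod' : (L'.map Prod.fst).Nodup := by rw [hmapfst]; exact (List.nodup_reverse.2 hnod)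
  have hused : ∀ t ∈ L', f t.1 = some (t.2.2, t.2.1) := by
    rintro ⟨e, x, y⟩ ht
    rw [hL', List.mem_map] at ht
    obtain ⟨⟨e', a, b⟩, ht', heq⟩ := ht
    simp only [Prod.mk.injEq] at heq
    obtain ⟨rfl, rfl, rfl⟩ := heq
    exact hval _ (List.mem_reverse.1 ht')
  have hok' : ∀ t ∈ L', StepOK G A f t := fun t ht => .inr (hused t ht)
  have hsteps' : Steps v u L' := hsteps.rev
  have hexc : ∀ w, excess A (toggleAll f L') w =
      excess A f w + ((if v = w then 1 else 0) - (if u = w then 1 else 0)) := by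
    intro w
    rw [excess_toggleAll hf.mem hnod' hok' w, hsteps'.sum_contrib]
  constructor
  · intro e a b heq
    by_cases hL : e ∈ L'.map Prod.fst
    · obtain ⟨x, y, ht⟩ := mem_map_fst hL
      rw [toggleAll_mem hnod' ht, if_neg (by simp [hused _ ht])] at heq
      exact absurd heq (by simp)
    · rw [toggleAll_not_mem hL] at heq
      exact hf.mem e a b heq
  · intro w hwu hwv
    rw [hexc w, hf.conserve w hwu hwv, if_neg (fun h => hwv h.symm),
      if_neg (fun h => hwu h.symm)]
    ring
  · rw [hexc u, hf.val, if_neg (fun h => huv h.symm), if_pos rfl]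
    ring

/-- From positive excess one can extract an oriented trail to `v` along used edges. -/
lemma extract_aux {A : Finset E} {v : V} : ∀ (n : ℕ) (f : E → Option (V × V)) (a : V),
    (A.filter (fun e => f e ≠ none)).card = n → a ≠ v →
    (∀ e a' b, f e = some (a', b) → e ∈ A ∧ G.ends e = s(a', b)) →
    0 < excess A f a → (∀ w, w ≠ v → 0 ≤ excess A f w) →
    ∃ L : List (E × V × V), Steps a v L ∧ (L.map Prod.fst).Nodup ∧
      ∀ t ∈ L, f t.1 = some (t.2.1, t.2.2) := by
  intro n
  induction n using Nat.strong_induction_on with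
  | _ n IH =>
    intro f a hcard hav hmem hpos hnn
    -- find an edge leaving `a`
    have hex : ∃ e ∈ A, 0 < contrib (f e) a := by
      by_contra hcon
      push_neg at hcon
      have : excess A f a ≤ 0 := Finset.sum_nonpos hcon
      omega
    obtain ⟨e, heA, hepos⟩ := hex
    obtain ⟨b, hfe, hba⟩ : ∃ b, f e = some (a, b) ∧ b ≠ a := by
      rcases hfe : f e with _ | ⟨x, y⟩
      · rw [hfe] at hepos; simp at hepos
      · rw [hfe] at hepos
        rw [contrib_some] at hepos
        split_ifs at hepos with h1 h2 h2 <;> try omega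
        exact ⟨y, by rw [h1], h2⟩
    set f₁ := Function.update f e none with hf₁
    have hupd : ∀ w, excess A f₁ w = excess A f w - contrib (f e) w := by
      intro w
      have h1 : excess A f w = contrib (f e) w + ∑ x ∈ A.erase e, contrib (f x) w :=
        (Finset.add_sum_erase A (fun x => contrib (f x) w) heA).symm
      have h2 : excess A f₁ w = contrib (f₁ e) w + ∑ x ∈ A.erase e, contrib (f₁ x) w :=
        (Finset.add_sum_erase A (fun x => contrib (f₁ x) w) heA).symm
      have h3 : ∑ x ∈ A.erase e, contrib (f₁ x) w = ∑ x ∈ A.erase e, contrib (f x) w :=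
        Finset.sum_congr rfl (fun x hx => by
          rw [hf₁, Function.update_of_ne (Finset.ne_of_mem_erase hx)])
      have h4 : contrib (f₁ e) w = 0 := by rw [hf₁, Function.update_self, contrib_none]
      rw [h2, h3, h4, h1]; ring
    have hcard₁ : (A.filter (fun e' => f₁ e' ≠ none)).card < n := by
      have hfilt : A.filter (fun e' => f₁ e' ≠ none) = (A.filter (fun e' => f e' ≠ none)).erase e := by
        ext e'
        simp only [Finset.mem_filter, Finset.mem_erase]
        constructor
        · rintro ⟨hA', hne⟩
          have he' : e' ≠ e := by
            rintro rfl; rw [hf₁, Function.update_self] at hne; exact hne rfl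
          rw [hf₁, Function.update_of_ne he'] at hne
          exact ⟨he', hA', hne⟩
        · rintro ⟨he', hA', hne⟩
          rw [hf₁, Function.update_of_ne he']
          exact ⟨hA', hne⟩
      have hmem' : e ∈ A.filter (fun e' => f e' ≠ none) :=
        Finset.mem_filter.2 ⟨heA, by rw [hfe]; simp⟩
      have hn0 : 0 < n := hcard ▸ Finset.card_pos.2 ⟨e, hmem'⟩
      rw [hfilt, Finset.card_erase_of_mem hmem', hcard]
      omega
    have hmem₁ : ∀ e' a' b', f₁ e' = some (a', b') → e' ∈ A ∧ G.ends e' = s(a', b') := by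
      intro e' a' b' h'
      by_cases he' : e' = e
      · subst he'; rw [hf₁, Function.update_self] at h'; exact absurd h' (by simp)
      · rw [hf₁, Function.update_of_ne he'] at h'; exact hmem _ _ _ h'
    by_cases hbv : b = v
    · refine ⟨[(e, a, v)], .cons e a (.nil v), by simp, ?_⟩
      rintro t ht
      simp only [List.mem_singleton] at ht
      subst ht
      show f e = some (a, v)
      rw [hfe, hbv]
    · have hkey : excess A f₁ b = excess A f b + 1 := by
        rw [hupd b, hfe, contrib_some, if_neg (fun h => hba h.symm), if_pos rfl]; ring
      have hpos₁ : 0 < excess A f₁ b := by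
        have := hnn b hbv; omega
      have hnn₁ : ∀ w, w ≠ v → 0 ≤ excess A f₁ w := by
        intro w hwv
        rw [hupd w, hfe, contrib_some]
        have h0 := hnn w hwv
        by_cases hw1 : a = w
        · subst hw1
          rw [if_pos rfl, if_neg hba]
          omega
        · rw [if_neg hw1]; split_ifs <;> omega
      obtain ⟨L₁, hsteps₁, hnod₁, hval₁⟩ := IH _ hcard₁ f₁ b rfl hbv hmem₁ hpos₁ hnn₁
      have heL₁ : e ∉ L₁.map Prod.fst := by
        intro hL
        obtain ⟨x, y, ht⟩ := mem_map_fst hL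
        have hval' := hval₁ _ ht
        rw [hf₁] at hval'
        simp only [Function.update_self] at hval'
        exact absurd hval' (by simp)
      refine ⟨(e, a, b) :: L₁, .cons e a hsteps₁, ?_, ?_⟩
      · simp only [List.map_cons]
        exact List.nodup_cons.2 ⟨heL₁, hnod₁⟩
      · rintro t ht
        rcases List.mem_cons.1 ht with rfl | ht'
        · exact hfe
        · have h' := hval₁ _ ht'
          have hne : t.1 ≠ e := fun h'' => heL₁ (h'' ▸ List.mem_map.2 ⟨t, ht', rfl⟩)
          rw [hf₁, Function.update_of_ne hne] at h'
          exact h'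

/-- Build a walk realising an oriented step list. -/
lemma steps_to_walk {a b : V} {L : List (E × V × V)} (h : Steps a b L)
    (hends : ∀ t ∈ L, G.ends t.1 = s(t.2.1, t.2.2)) :
    ∃ p : G.Walk a b, p.edges = L.map Prod.fst := by
  induction h with
  | nil a => exact ⟨.nil a, rfl⟩
  | @cons b' c L' e a h ih =>
      obtain ⟨p, hp⟩ := ih (fun t ht => hends t (List.mem_cons.2 (.inr ht)))
      refine ⟨.cons e (hends (e, a, b') (List.mem_cons.2 (.inl rfl))) p, ?_⟩
      show e :: p.edges = _
      rw [hp]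
      rfl

/-- Flow decomposition: a flow of value `j` yields `j` pairwise edge-disjoint walks. -/
lemma decompose {A : Finset E} {u v : V} (huv : u ≠ v) :
    ∀ (j : ℕ) (f : E → Option (V × V)), IsFlow G A u v f (j : ℤ) →
    ∃ W : Fin j → G.Walk u v,
      (∀ i, ∀ e ∈ (W i).edges, f e ≠ none ∧ e ∈ A) ∧
      (∀ i i', i ≠ i' → ∀ e, e ∈ (W i).edges → e ∉ (W i').edges) := by
  intro j
  induction j with
  | zero => exact fun f _ => ⟨Fin.elim0, fun i => i.elim0, fun i => i.elim0⟩
  | succ j IHj =>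
    intro f hf
    have hpos : 0 < excess A f u := by
      rw [hf.val]; positivity
    obtain ⟨L, hsteps, hnod, hval⟩ := extract_aux (G := G)
      ((A.filter (fun e => f e ≠ none)).card) f u rfl huv hf.mem hpos
      (fun w hwv => by
        by_cases hwu : w = u
        · subst hwu; rw [hf.val]; positivity
        · rw [hf.conserve w hwu hwv])
    obtain ⟨p₀, hp₀⟩ := steps_to_walk hsteps (fun t ht => (hf.mem _ _ _ (hval t ht)).2)
    have hf' : IsFlow G A u v (toggleAll f (L.reverse.map (fun t => (t.1, t.2.2, t.2.1)))) (j : ℤ) := by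
      have := hf.remove huv hnod hval hsteps
      have harith : ((j : ℤ) + 1) - 1 = (j : ℤ) := by ring
      rw [show ((j + 1 : ℕ) : ℤ) = (j : ℤ) + 1 by push_cast; ring] at this
      rwa [harith] at this
    set f' := toggleAll f (L.reverse.map (fun t => (t.1, t.2.2, t.2.1))) with hf'def
    have hmapfst : (L.reverse.map (fun t : E × V × V => (t.1, t.2.2, t.2.1))).map Prod.fst
        = (L.map Prod.fst).reverse := by
      rw [List.map_map, List.map_reverse]; rfl
    have hzero : ∀ e ∈ L.map Prod.fst, f' e = none := by
      intro e he
      obtain ⟨x, y, ht⟩ := mem_map_fst he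
      have ht' : (e, y, x) ∈ L.reverse.map (fun t : E × V × V => (t.1, t.2.2, t.2.1)) :=
        List.mem_map.2 ⟨(e, x, y), List.mem_reverse.2 ht, rfl⟩
      rw [hf'def, toggleAll_mem (by rw [hmapfst]; exact List.nodup_reverse.2 hnod) ht',
        if_neg (by rw [hval _ ht]; simp)]
    have hsame : ∀ e, e ∉ L.map Prod.fst → f' e = f e := by
      intro e he
      rw [hf'def, toggleAll_not_mem (by rw [hmapfst]; simpa using he)]
    obtain ⟨W', hW'used, hW'disj⟩ := IHj f' hf'
    refine ⟨Fin.cases p₀ W', ?_, ?_⟩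
    · intro i
      rcases Fin.eq_zero_or_eq_succ i with rfl | ⟨i₀, rfl⟩
      · intro e he
        simp only [Fin.cases_zero] at he
        rw [hp₀] at he
        obtain ⟨x, y, ht⟩ := mem_map_fst he
        have hv := hval _ ht
        exact ⟨by rw [hv]; simp, (hf.mem _ _ _ hv).1⟩
      · intro e he
        simp only [Fin.cases_succ] at he
        obtain ⟨h1, h2⟩ := hW'used i₀ e he
        refine ⟨?_, h2⟩
        intro hno
        by_cases hL : e ∈ L.map Prod.fst
        · exact h1 (hzero e hL)
        · rw [hsame e hL] at h1; exact h1 hno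
    · intro i i' hii'
      rcases Fin.eq_zero_or_eq_succ i with rfl | ⟨i₀, rfl⟩ <;>
        rcases Fin.eq_zero_or_eq_succ i' with rfl | ⟨i₁, rfl⟩
      · exact absurd rfl hii'
      · intro e he hmem'
        simp only [Fin.cases_zero, Fin.cases_succ] at he hmem'
        rw [hp₀] at he
        exact (hW'used i₁ e hmem').1 (hzero e he)
      · intro e he hmem'
        simp only [Fin.cases_zero, Fin.cases_succ] at he hmem'
        rw [hp₀] at hmem'
        exact (hW'used i₀ e he).1 (hzero e hmem')
      · intro e he hmem'
        simp only [Fin.cases_succ] at he hmem'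
        exact hW'disj i₀ i₁ (fun h => hii' (by rw [h])) e he hmem'


end Multigraph
end FLOW2
section FLOW3
namespace Multigraph

variable {V E : Type} {G : Multigraph V E}

open scoped Classical

/-- Any point reachable by `ReflTransGen` is reachable by a chain with no
repeated elements. -/
lemma exists_nodup_chain {α : Type*} {r : α → α → Prop} {a b : α}
    (h : Relation.ReflTransGen r a b) :
    ∃ l : List α, List.Chain r a l ∧ (a :: l).getLast (by simp) = b ∧ (a :: l).Nodup := by
  induction h using Relation.ReflTransGen.head_induction_on with
  | refl => exact ⟨[], List.Chain.nil, rfl, List.nodup_singleton b⟩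
  | head hr _ ih =>
    rename_i a c _
    obtain ⟨l, hchain, hlast, hnodup⟩ := ih
    by_cases hmem : a ∈ c :: l
    · obtain ⟨s, t, hst⟩ := List.append_of_mem hmem
      refine ⟨t, ?_, ?_, ?_⟩
      · have : List.Chain' r (c :: l) := hchain
        have := this.suffix ⟨s, hst.symm⟩
        exact this
      · have key : ∀ (l₁ l₂ : List α) (h₁ : l₁ ≠ []) (h₂ : l₂ ≠ []), l₁ = l₂ →
            l₁.getLast h₁ = l₂.getLast h₂ := by rintro l₁ l₂ h₁ h₂ rfl; rfl
        rw [← hlast]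
        rw [key (c :: l) (s ++ a :: t) (by simp) (by rw [← hst]; simp) hst]
        exact (List.getLast_append_of_ne_nil (l := s) (l' := a :: t) (by simp) (by simp)).symm
      · have : (a :: t).Sublist (c :: l) := hst ▸ (List.sublist_append_right s (a :: t))
        exact this.nodup hnodup
    · exact ⟨c :: l, List.Chain.cons hr hchain, by rw [← hlast]; rfl,
        List.nodup_cons.2 ⟨hmem, hnodup⟩⟩

/-- Residual step relation: either traverse an unused edge, or traverse a used
edge backwards. -/
def RS (G : Multigraph V E) (A : Finset E) (f : E → Option (V × V)) (a b : V) : Prop :=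
  ∃ e, (e ∈ A ∧ f e = none ∧ G.ends e = s(a, b)) ∨ f e = some (b, a)

/-- A vertex-nodup residual chain yields an edge-nodup admissible step list. -/
lemma chain_to_steps {A : Finset E} {f : E → Option (V × V)} :
    ∀ (l : List V) (a : V), List.Chain (RS G A f) a l → (a :: l).Nodup →
    ∃ L : List (E × V × V),
      Steps a ((a :: l).getLast (by simp)) L ∧
      (∀ t ∈ L, StepOK G A f t) ∧ (L.map Prod.fst).Nodup ∧
      (∀ t ∈ L, t.2.1 ∈ a :: l ∧ t.2.2 ∈ l) := by
  intro l
  induction l with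
  | nil => exact fun a _ _ => ⟨[], .nil a, by simp, by simp, by simp⟩
  | cons b l ih =>
    intro a hchain hnodup
    replace hchain := List.chain_cons.1 hchain
    obtain ⟨⟨e, he⟩, hchain'⟩ := hchain
    have hnodup' : (b :: l).Nodup := (List.nodup_cons.1 hnodup).2
    have hanotin : a ∉ b :: l := (List.nodup_cons.1 hnodup).1
    obtain ⟨L₁, hsteps₁, hok₁, hnod₁, hmem₁⟩ := ih b hchain' hnodup'
    have heL₁ : e ∉ L₁.map Prod.fst := by
      intro hL
      obtain ⟨x, y, ht⟩ := mem_map_fst hL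
      have hxy := hmem₁ _ ht
      have hx : x ∈ b :: l := hxy.1
      have hy : y ∈ b :: l := List.mem_cons.2 (.inr hxy.2)
      rcases he with ⟨_, hnone, hends⟩ | hsome
      · rcases hok₁ _ ht with ⟨_, _, hends'⟩ | hsome'
        · have : s(a, b) = s(x, y) := by rw [← hends, hends']
          rw [Sym2.eq_iff] at this
          rcases this with ⟨rfl, _⟩ | ⟨rfl, _⟩
          · exact hanotin hx
          · exact hanotin hy
        · rw [hnone] at hsome'; exact absurd hsome' (by simp)
      · rcases hok₁ _ ht with ⟨_, hnone', _⟩ | hsome'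
        · rw [hnone'] at hsome; exact absurd hsome (by simp)
        · rw [hsome] at hsome'
          simp only [Option.some.injEq, Prod.mk.injEq] at hsome'
          obtain ⟨rfl, rfl⟩ := hsome'
          first
          | exact hanotin hx
          | exact hanotin hy
    refine ⟨(e, a, b) :: L₁, ?_, ?_, ?_, ?_⟩
    · have : ((a :: b :: l).getLast (by simp)) = ((b :: l).getLast (by simp)) := by
        rw [List.getLast_cons (by simp)]
      rw [this]
      exact .cons e a hsteps₁
    · rintro t ht
      rcases List.mem_cons.1 ht with rfl | ht'
      · exact he
      · exact hok₁ _ ht'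
    · simp only [List.map_cons]
      exact List.nodup_cons.2 ⟨heL₁, hnod₁⟩
    · rintro t ht
      rcases List.mem_cons.1 ht with rfl | ht'
      · exact ⟨List.mem_cons.2 (.inl rfl), List.mem_cons.2 (.inl rfl)⟩
      · have := hmem₁ _ ht'
        exact ⟨List.mem_cons.2 (.inr this.1), List.mem_cons.2 (.inr this.2)⟩

/-- Summing the excess over a finite vertex set counts used edges crossing it. -/
lemma sum_excess (A : Finset E) (f : E → Option (V × V)) (S : Finset V) :
    ∑ w ∈ S, excess A f w =
      ((A.filter (fun e => ∃ a b, f e = some (a, b) ∧ a ∈ S)).card : ℤ)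
      - ((A.filter (fun e => ∃ a b, f e = some (a, b) ∧ b ∈ S)).card : ℤ) := by
  simp only [excess]
  rw [Finset.sum_comm]
  have hper : ∀ e ∈ A, ∑ w ∈ S, contrib (f e) w =
        (if (∃ a b, f e = some (a, b) ∧ a ∈ S) then (1 : ℤ) else 0)
        - (if (∃ a b, f e = some (a, b) ∧ b ∈ S) then (1 : ℤ) else 0) := by
      intro e _
      rcases hfe : f e with _ | ⟨a, b⟩
      · simp
      · simp only [contrib_some]
        rw [Finset.sum_sub_distrib]
        rw [Finset.sum_ite_eq S a (fun _ => (1 : ℤ)), Finset.sum_ite_eq S b (fun _ => (1 : ℤ))]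
        congr 1 <;>
        · congr 1
          simp only [eq_iff_iff]
          constructor
          · intro h; exact ⟨a, b, rfl, h⟩
          · rintro ⟨a', b', heq, h⟩
            simp only [Option.some.injEq, Prod.mk.injEq] at heq
            obtain ⟨rfl, rfl⟩ := heq
            exact h
  rw [Finset.sum_congr rfl hper, Finset.sum_sub_distrib, Finset.sum_boole, Finset.sum_boole]

end Multigraph
end FLOW3
section MENGER
namespace Multigraph

variable {V E : Type} {G : Multigraph V E}

open scoped Classical

/-- **Menger's theorem** (edge version) for multigraphs, with edges restricted
to a finite set `A`. -/
theorem menger (A : Finset E) (k : ℕ) (u v : V)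
    (h : ∀ F : Finset E, F.card < k → G.Con ((A : Set E) \ (F : Set E)) u v) :
    G.HasEdgeDisjointPaths k u v := by
  classical
  by_cases huv : u = v
  · subst huv
    exact ⟨fun _ => .nil u, fun i => List.nodup_singleton u,
      fun i j _ e he => by simp [Walk.edges] at he⟩
  have flows : ∀ j : ℕ, j ≤ k → ∃ f, IsFlow G A u v f (j : ℤ) := by
    intro j hj
    induction j with
    | zero =>
      refine ⟨fun _ => none, ⟨?_, ?_, ?_⟩⟩
      · intro e a b h'; exact absurd h' (by simp)
      · intro w _ _; simp [excess]
      · simp [excess]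
    | succ j IHj =>
      obtain ⟨f, hf⟩ := IHj (le_of_lt (Nat.lt_of_succ_le hj))
      by_cases hreach : Relation.ReflTransGen (RS G A f) u v
      · obtain ⟨l, hchain, hlast, hnodup⟩ := exists_nodup_chain hreach
        obtain ⟨L, hsteps, hok, hnod, _⟩ := chain_to_steps l u hchain hnodup
        rw [hlast] at hsteps
        refine ⟨toggleAll f L, ?_⟩
        have haug := hf.augment huv hnod hok hsteps
        rwa [show ((j + 1 : ℕ) : ℤ) = (j : ℤ) + 1 by push_cast; ring]
      · exfalso
        set R : Set V := {w | Relation.ReflTransGen (RS G A f) u w} with hR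
        have hvR : v ∉ R := hreach
        set tailR : E → Prop := fun e => ∃ a b, f e = some (a, b) ∧ a ∈ R with htailR
        set headR : E → Prop := fun e => ∃ a b, f e = some (a, b) ∧ b ∈ R with hheadR
        set F : Finset E := A.filter (fun e => tailR e ∧ ¬ headR e) with hF
        set S : Finset V :=
          (A.biUnion (fun e => (G.ends e).toMset.toFinset) ∪ {u}).filter (· ∈ R) with hS
        -- vertices of used edges lie in the edge-endpoint set
        have hendpt : ∀ e a b, f e = some (a, b) →
            a ∈ A.biUnion (fun e => (G.ends e).toMset.toFinset) ∧
            b ∈ A.biUnion (fun e => (G.ends e).toMset.toFinset) := by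
          intro e a b hfe
          obtain ⟨heA, hends⟩ := hf.mem _ _ _ hfe
          constructor <;>
          · refine Finset.mem_biUnion.2 ⟨e, heA, ?_⟩
            rw [hends]
            simp [Sym2.toMset, Multiset.mem_toFinset]
        have hSmem : ∀ e a b, f e = some (a, b) → ((a ∈ S ↔ a ∈ R) ∧ (b ∈ S ↔ b ∈ R)) := by
          intro e a b hfe
          obtain ⟨ha, hb⟩ := hendpt e a b hfe
          constructor <;>
          · rw [hS]
            simp only [Finset.mem_filter, Finset.mem_union, Finset.mem_singleton]
            constructor
            · exact fun hh => hh.2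
            · intro hh
              exact ⟨by first | exact .inl ha | exact .inl hb, hh⟩
        -- the excess sum over S
        have huS : u ∈ S := by
          rw [hS]
          simp only [Finset.mem_filter, Finset.mem_union, Finset.mem_singleton]
          exact ⟨.inr trivial, Relation.ReflTransGen.refl⟩
        have hsumS : ∑ w ∈ S, excess A f w = (j : ℤ) := by
          rw [Finset.sum_eq_single_of_mem u huS, hf.val]
          intro w hwS hwu
          refine hf.conserve w hwu (fun hwv => ?_)
          rw [hS] at hwS
          exact hvR (hwv ▸ (Finset.mem_filter.1 hwS).2)
        -- identify the two filters with tailR/headR filters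
        have hT1 : A.filter (fun e => ∃ a b, f e = some (a, b) ∧ a ∈ S) = A.filter tailR := by
          refine Finset.filter_congr (fun e _ => ?_)
          constructor
          · rintro ⟨a, b, hfe, haS⟩
            exact ⟨a, b, hfe, ((hSmem e a b hfe).1).1 haS⟩
          · rintro ⟨a, b, hfe, haR⟩
            exact ⟨a, b, hfe, ((hSmem e a b hfe).1).2 haR⟩
        have hT2 : A.filter (fun e => ∃ a b, f e = some (a, b) ∧ b ∈ S) = A.filter headR := by
          refine Finset.filter_congr (fun e _ => ?_)
          constructor
          · rintro ⟨a, b, hfe, hbS⟩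
            exact ⟨a, b, hfe, ((hSmem e a b hfe).2).1 hbS⟩
          · rintro ⟨a, b, hfe, hbR⟩
            exact ⟨a, b, hfe, ((hSmem e a b hfe).2).2 hbR⟩
        -- headR implies tailR (used edges cannot enter R from outside)
        have hhead_tail : ∀ e, headR e → tailR e := by
          rintro e ⟨a, b, hfe, hbR⟩
          exact ⟨a, b, hfe, Relation.ReflTransGen.tail hbR ⟨e, .inr hfe⟩⟩
        have hsplit : (A.filter tailR).card = (A.filter (fun e => tailR e ∧ headR e)).card + F.card := by
          rw [hF, ← Finset.filter_filter, ← Finset.filter_filter]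
          exact (Finset.card_filter_add_card_filter_not (s := A.filter tailR)
            headR).symm
        have hT3 : A.filter (fun e => tailR e ∧ headR e) = A.filter headR :=
          Finset.filter_congr (fun e _ => ⟨fun hh => hh.2, fun hh => ⟨hhead_tail e hh, hh⟩⟩)
        have hsum := sum_excess A f S
        rw [hsumS, hT1, hT2] at hsum
        have hFcard : (F.card : ℤ) = (j : ℤ) := by
          rw [hsplit, hT3] at hsum
          push_cast at hsum ⊢
          linarith
        have hFk : F.card < k := by
          have : F.card = j := by exact_mod_cast hFcard
          omega
        obtain ⟨p, hp⟩ := h F hFk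
        -- any walk avoiding F stays inside R
        have stays : ∀ {a b : V} (q : G.Walk a b),
            (∀ e ∈ q.edges, e ∈ (A : Set E) \ (F : Set E)) → a ∈ R → b ∈ R := by
          intro a b q
          induction q with
          | nil w => exact fun _ ha => ha
          | cons e he q ihq =>
            rename_i a' x b'
            intro hedges haR
            have he' : e ∈ (A : Set E) \ (F : Set E) := hedges e (List.mem_cons.2 (.inl rfl))
            have heA : e ∈ A := he'.1
            have heF : e ∉ F := by
              intro hc
              exact he'.2 (by exact_mod_cast hc)
            have hxR : x ∈ R := by
              rcases hfe : f e with _ | ⟨c, d⟩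
              · exact Relation.ReflTransGen.tail haR ⟨e, .inl ⟨heA, hfe, he⟩⟩
              · have hends := (hf.mem _ _ _ hfe).2
                rw [he] at hends
                rw [Sym2.eq_iff] at hends
                rcases hends with ⟨hc, hd⟩ | ⟨hd, hc⟩
                · -- c = a', d = x : used edge oriented out of a'
                  subst hc; subst hd
                  by_contra hxnR
                  apply heF
                  rw [hF]
                  refine Finset.mem_filter.2 ⟨heA, ⟨a', x, hfe, haR⟩, ?_⟩
                  rintro ⟨a'', b'', hfe', hbR⟩
                  rw [hfe] at hfe'
                  simp only [Option.some.injEq, Prod.mk.injEq] at hfe'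
                  obtain ⟨rfl, rfl⟩ := hfe'
                  exact hxnR hbR
                · -- c = x, a' = d : used edge oriented into a', traverse backwards
                  subst hc; subst hd
                  exact Relation.ReflTransGen.tail haR ⟨e, .inr hfe⟩
            exact ihq (fun e' he'' => hedges e' (List.mem_cons.2 (.inr he''))) hxR
        exact hvR (stays p hp Relation.ReflTransGen.refl)
  obtain ⟨f, hflow⟩ := flows k le_rfl
  obtain ⟨W, _, hWdisj⟩ := decompose huv k f hflow
  exact ⟨fun i => (W i).bypass, fun i => (W i).bypass_isPath,
    fun i j hij e he hj' => hWdisj i j hij e ((W i).edges_bypass_subset he)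
      ((W j).edges_bypass_subset hj')⟩

end Multigraph
end MENGER
section FINAL
namespace Multigraph

variable {V E : Type} {G : Multigraph V E}

open scoped Classical

lemma rel_trans {k : ℕ} {a b c : V} (hab : G.Rel k a b) (hbc : G.Rel k b c) :
    G.Rel k a c := by
  obtain ⟨B₁, h₁⟩ := rel_con hab
  obtain ⟨B₂, h₂⟩ := rel_con hbc
  refine .inr (menger (B₁ ∪ B₂) k a c ?_)
  intro F hF
  refine ((h₁ F hF).mono ?_).trans ((h₂ F hF).mono ?_) <;>
  · rintro e ⟨he1, he2⟩
    refine ⟨?_, he2⟩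
    simp only [Finset.coe_union, Set.mem_union]
    first
    | exact .inl he1
    | exact .inr he1

end Multigraph

/-- Any family of pairwise edge-disjoint paths, each joining
two distinct equivalence classes `C₁` and `C₂` of `R^k`, has cardinality at
most `k - 1`. -/
theorem edgeDisjoint_paths_between_classes_le {V E : Type} (G : Multigraph V E)
    (k : ℕ) (hk : 0 < k) (C₁ C₂ : Set V)
    (h₁ : Multigraph.IsClassOf (G.Rel k) C₁) (h₂ : Multigraph.IsClassOf (G.Rel k) C₂)
    (hne : C₁ ≠ C₂)
    (n : ℕ) (f : Fin n → Σ u : V, Σ v : V, G.Walk u v)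
    (hpath : ∀ i, ((f i).2.2).IsPath)
    (hends : ∀ i, ((f i).1 ∈ C₁ ∧ (f i).2.1 ∈ C₂) ∨ ((f i).1 ∈ C₂ ∧ (f i).2.1 ∈ C₁))
    (hdisj : ∀ i j, i ≠ j → ∀ e, e ∈ ((f i).2.2).edges → e ∉ ((f j).2.2).edges) :
    n ≤ k - 1 := by
  classical
  open Multigraph in
  by_contra hcon
  push_neg at hcon
  have hkn : k ≤ n := by omega
  obtain ⟨v₁, rfl⟩ := h₁
  obtain ⟨v₂, rfl⟩ := h₂
  set ι : Fin k → Fin n := fun i => ⟨i.1, lt_of_lt_of_le i.isLt hkn⟩ with hι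
  have hιinj : ∀ i j : Fin k, i ≠ j → ι i ≠ ι j := by
    intro i j hij hh
    apply hij
    have : (ι i).1 = (ι j).1 := congrArg Fin.val hh
    exact Fin.ext this
  have claim : ∀ i : Fin k, ∃ B : Finset E,
      (∀ e ∈ ((f (ι i)).2.2).edges, e ∈ B) ∧
      ∀ F : Finset E, F.card < k → (∀ e ∈ ((f (ι i)).2.2).edges, e ∉ F) →
        G.Con ((B : Set E) \ (F : Set E)) v₁ v₂ := by
    intro i
    rcases hends (ι i) with ⟨hx, hy⟩ | ⟨hx, hy⟩
    · obtain ⟨B₁, hB₁⟩ := Multigraph.rel_con (hx : G.Rel k _ v₁)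
      obtain ⟨B₂, hB₂⟩ := Multigraph.rel_con (hy : G.Rel k _ v₂)
      refine ⟨B₁ ∪ B₂ ∪ ((f (ι i)).2.2).edges.toFinset, fun e he => by simp [he], ?_⟩
      intro F hF havoid
      have hsub₁ : (B₁ : Set E) \ (F : Set E) ⊆
          ((B₁ ∪ B₂ ∪ ((f (ι i)).2.2).edges.toFinset : Finset E) : Set E) \ (F : Set E) := by
        rintro e ⟨he1, he2⟩; exact ⟨by simp only [Finset.coe_union, Set.mem_union]; exact .inl (.inl he1), he2⟩
      have hsub₂ : (B₂ : Set E) \ (F : Set E) ⊆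
          ((B₁ ∪ B₂ ∪ ((f (ι i)).2.2).edges.toFinset : Finset E) : Set E) \ (F : Set E) := by
        rintro e ⟨he1, he2⟩; exact ⟨by simp only [Finset.coe_union, Set.mem_union]; exact .inl (.inr he1), he2⟩
      have c1 : G.Con _ v₁ (f (ι i)).1 := ((hB₁ F hF).mono hsub₁).symm
      have c2 : G.Con (((B₁ ∪ B₂ ∪ ((f (ι i)).2.2).edges.toFinset : Finset E) : Set E) \ (F : Set E))
          (f (ι i)).1 (f (ι i)).2.1 :=
        ⟨(f (ι i)).2.2, fun e he =>
          ⟨by simp only [Finset.coe_union, Set.mem_union]; exact .inr (by simpa using he), havoid e he⟩⟩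
      have c3 : G.Con _ (f (ι i)).2.1 v₂ := (hB₂ F hF).mono hsub₂
      exact (c1.trans c2).trans c3
    · obtain ⟨B₁, hB₁⟩ := Multigraph.rel_con (hy : G.Rel k _ v₁)
      obtain ⟨B₂, hB₂⟩ := Multigraph.rel_con (hx : G.Rel k _ v₂)
      refine ⟨B₁ ∪ B₂ ∪ ((f (ι i)).2.2).edges.toFinset, fun e he => by simp [he], ?_⟩
      intro F hF havoid
      have hsub₁ : (B₁ : Set E) \ (F : Set E) ⊆
          ((B₁ ∪ B₂ ∪ ((f (ι i)).2.2).edges.toFinset : Finset E) : Set E) \ (F : Set E) := by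
        rintro e ⟨he1, he2⟩; exact ⟨by simp only [Finset.coe_union, Set.mem_union]; exact .inl (.inl he1), he2⟩
      have hsub₂ : (B₂ : Set E) \ (F : Set E) ⊆
          ((B₁ ∪ B₂ ∪ ((f (ι i)).2.2).edges.toFinset : Finset E) : Set E) \ (F : Set E) := by
        rintro e ⟨he1, he2⟩; exact ⟨by simp only [Finset.coe_union, Set.mem_union]; exact .inl (.inr he1), he2⟩
      have c1 : G.Con _ v₁ (f (ι i)).2.1 := ((hB₁ F hF).mono hsub₁).symm
      have c2 : G.Con (((B₁ ∪ B₂ ∪ ((f (ι i)).2.2).edges.toFinset : Finset E) : Set E) \ (F : Set E))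
          (f (ι i)).2.1 (f (ι i)).1 :=
        Multigraph.Con.symm ⟨(f (ι i)).2.2, fun e he =>
          ⟨by simp only [Finset.coe_union, Set.mem_union]; exact .inr (by simpa using he), havoid e he⟩⟩
      have c3 : G.Con _ (f (ι i)).1 v₂ := (hB₂ F hF).mono hsub₂
      exact (c1.trans c2).trans c3
  choose B hBsub hBcon using claim
  set A : Finset E := Finset.univ.biUnion B with hA
  have key : G.Rel k v₁ v₂ := by
    refine .inr (Multigraph.menger A k v₁ v₂ ?_)
    intro F hF
    obtain ⟨i, hi⟩ := Multigraph.exists_avoid (E := E) (fun i : Fin k => ((f (ι i)).2.2).edges)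
      (fun i j hij => hdisj (ι i) (ι j) (hιinj i j hij)) F hF
    refine (hBcon i F hF hi).mono ?_
    rintro e ⟨he1, he2⟩
    refine ⟨?_, he2⟩
    simp only [hA, Finset.coe_biUnion, Finset.coe_univ, Set.mem_univ, Set.iUnion_true,
      Set.mem_iUnion]
    exact ⟨i, he1⟩
  apply hne
  ext x
  simp only [Set.mem_setOf_eq]
  exact ⟨fun hx => Multigraph.rel_trans hx key,
    fun hx => Multigraph.rel_trans hx (Multigraph.rel_symm key)⟩

end FINAL
end

section
/- Let G be an edge-minimal, k-edge-connected multigraph, and let G^k be the quotient multigraph whose vertices are the equivalence classes of the relation R^{k+1} on the vertices of G, with one edge between classes v₁ and v₂ for every edge (u₁,u₂) of G with u₁ ∈ v₁ and u₂ ∈ v₂. Then G^k has more than one vertex, and G^k is exactly k-edge-connected: between any two distinct vertices of G^k the maximum number of pairwise edge-disjoint paths is exactly k. -/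
namespace Multigraph

variable {V E : Type}

/-- A multigraph has more than one vertex and exactly `k` pairwise edge-disjoint
paths (as a maximum) between any two distinct vertices. -/
def ExactlyEdgeConnected (G : Multigraph V E) (k : ℕ) : Prop :=
  (∃ u v : V, u ≠ v) ∧ ∀ u v : V, u ≠ v →
    G.HasEdgeDisjointPaths k u v ∧ ¬ G.HasEdgeDisjointPaths (k + 1) u v

/-- The quotient multigraph `G^k`: its vertices are the equivalence classes of
`R^(k+1)` and it has one edge between classes `v₁` and `v₂` for every edge
`(u₁, u₂)` of `G` with `u₁ ∈ v₁` and `u₂ ∈ v₂`.  (Since `R^(k+1)` is an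
equivalence relation, taking its equivalence closure does not change it.) -/
def quotientGraph (G : Multigraph V E) (k : ℕ) :
    Multigraph (Quotient (Relation.EqvGen.setoid (G.Rel (k + 1)))) E :=
  ⟨fun e => (G.ends e).map (Quotient.mk (Relation.EqvGen.setoid (G.Rel (k + 1))))⟩

end Multigraph

namespace Multigraph

variable {V E : Type} {G : Multigraph V E}

/-! ### Loop erasure -/

theorem Walk.suffix_walk : ∀ {a v : V} (q : G.Walk a v) (u : V), u ∈ q.support →
    ∃ r : G.Walk u v, (∀ e ∈ r.edges, e ∈ q.edges) ∧ r.support.IsSuffix q.support := by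
  intro a v q
  induction q with
  | nil w =>
    intro u hu
    simp only [Walk.support, List.mem_singleton] at hu
    subst hu
    exact ⟨Walk.nil _, by simp [Walk.edges], List.suffix_refl _⟩
  | @cons a b w e he p ih =>
    intro u hu
    by_cases h : u = a
    · subst h
      exact ⟨Walk.cons e he p, fun _ h => h, List.suffix_refl _⟩
    · simp only [Walk.support, List.mem_cons] at hu
      rcases hu with rfl | hu
      · exact absurd rfl h
      · obtain ⟨r, hr1, hr2⟩ := ih u hu
        exact ⟨r, fun e' h' => List.mem_cons_of_mem _ (hr1 e' h'),
          hr2.trans (List.suffix_cons _ _)⟩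

theorem Walk.exists_isPath : ∀ {u v : V} (W : G.Walk u v),
    ∃ P : G.Walk u v, P.IsPath ∧ ∀ e ∈ P.edges, e ∈ W.edges := by
  intro u v W
  induction W with
  | nil w => exact ⟨Walk.nil w, by simp [Walk.IsPath, Walk.support], by simp⟩
  | @cons u b w e he p ih =>
    obtain ⟨q, hq, hsub⟩ := ih
    by_cases hu : u ∈ q.support
    · obtain ⟨r, hr1, hr2⟩ := Walk.suffix_walk q _ hu
      exact ⟨r, hr2.sublist.nodup hq, fun e' h' =>
        List.mem_cons_of_mem _ (hsub e' (hr1 e' h'))⟩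
    · refine ⟨Walk.cons e he q, ?_, ?_⟩
      · exact List.nodup_cons.2 ⟨hu, hq⟩
      · intro e' h'
        simp only [Walk.edges, List.mem_cons] at h' ⊢
        rcases h' with rfl | h'
        · exact Or.inl rfl
        · exact Or.inr (hsub e' h')

open scoped Classical

private lemma Sym2.exists_pair {V : Type} (s : Sym2 V) : ∃ p : V × V, s = s(p.1, p.2) :=
  Sym2.ind (fun a b => ⟨(a, b), rfl⟩) s

variable {V E : Type}

/-- A chosen first endpoint of an edge. -/
noncomputable def fstE (G : Multigraph V E) (e : E) : V :=
  (Classical.choose (Sym2.exists_pair (G.ends e))).1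

/-- A chosen second endpoint of an edge. -/
noncomputable def sndE (G : Multigraph V E) (e : E) : V :=
  (Classical.choose (Sym2.exists_pair (G.ends e))).2

lemma ends_eq_fstE_sndE (G : Multigraph V E) (e : E) : G.ends e = s(G.fstE e, G.sndE e) :=
  Classical.choose_spec (Sym2.exists_pair (G.ends e))

/-- Signed incidence of edge `e` at vertex `x`. -/
noncomputable def sgn (G : Multigraph V E) (e : E) (x : V) : ℤ :=
  (if G.fstE e = x then 1 else 0) - (if G.sndE e = x then 1 else 0)

/-- The divergence of `f` at `x`. -/
noncomputable def div (G : Multigraph V E) (f : E → ℤ) (x : V) : ℤ :=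
  ∑ᶠ e, f e * G.sgn e x

/-- The sign of pushing one unit along `e` from `x` to `y`. -/
noncomputable def dir (G : Multigraph V E) (e : E) (x y : V) : ℤ :=
  if G.fstE e = x ∧ G.sndE e = y then 1 else -1

lemma ends_cases {G : Multigraph V E} {e : E} {x y : V} (he : G.ends e = s(x, y)) :
    (G.fstE e = x ∧ G.sndE e = y) ∨ (G.fstE e = y ∧ G.sndE e = x) := by
  have h := G.ends_eq_fstE_sndE e
  rw [he] at h
  rw [Sym2.eq, Sym2.rel_iff'] at h
  rcases h with h | h
  · exact Or.inl ⟨(Prod.ext_iff.1 h).1.symm, (Prod.ext_iff.1 h).2.symm⟩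
  · exact Or.inr ⟨(Prod.ext_iff.1 h).2.symm, (Prod.ext_iff.1 h).1.symm⟩

lemma sgn_mem {G : Multigraph V E} {e : E} {x : V} :
    G.sgn e x = 1 ∨ G.sgn e x = 0 ∨ G.sgn e x = -1 := by
  unfold Multigraph.sgn; split <;> split <;> simp

lemma sgn_eq_zero {G : Multigraph V E} {e : E} {x : V} (h1 : G.fstE e ≠ x)
    (h2 : G.sndE e ≠ x) : G.sgn e x = 0 := by
  unfold Multigraph.sgn
  rw [if_neg h1, if_neg h2]; ring

lemma dir_mul_sgn {G : Multigraph V E} {e : E} {x y : V} (he : G.ends e = s(x, y))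
    (hxy : x ≠ y) (z : V) :
    G.dir e x y * G.sgn e z = (if z = x then 1 else 0) - (if z = y then 1 else 0) := by
  rcases ends_cases he with ⟨h1, h2⟩ | ⟨h1, h2⟩
  · rw [Multigraph.dir, if_pos ⟨h1, h2⟩, one_mul, Multigraph.sgn, h1, h2]
    simp only [eq_comm]
  · have hne : ¬ (G.fstE e = x ∧ G.sndE e = y) := by
      rintro ⟨hx, -⟩; exact hxy (h1.symm.trans hx).symm
    rw [Multigraph.dir, if_neg hne, Multigraph.sgn, h1, h2]
    simp only [eq_comm]; ring

lemma div_support_subset {G : Multigraph V E} (f : E → ℤ) (x : V) :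
    Function.support (fun e => f e * G.sgn e x) ⊆ Function.support f := by
  intro e he
  simp only [Function.mem_support] at he ⊢
  intro h; apply he; rw [h, zero_mul]

lemma div_eq_sum {G : Multigraph V E} (f : E → ℤ) (x : V)
    {T : Finset E} (hT : Function.support f ⊆ T) :
    G.div f x = ∑ e ∈ T, f e * G.sgn e x :=
  finsum_eq_sum_of_support_subset _ ((div_support_subset f x).trans hT)

lemma single_support {e : E} (c : ℤ) :
    Function.support (fun e' => if e' = e then c else 0) ⊆ ({e} : Finset E) := by
  intro a ha
  simp only [Function.mem_support] at ha
  by_contra hne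
  simp only [Finset.coe_singleton, Set.mem_singleton_iff] at hne
  simp [hne] at ha

lemma div_add {G : Multigraph V E} {f g : E → ℤ} (hf : (Function.support f).Finite)
    (hg : (Function.support g).Finite) (x : V) :
    G.div (f + g) x = G.div f x + G.div g x := by
  have hT : Function.support (f + g) ⊆ (hf.toFinset ∪ hg.toFinset : Finset E) := by
    intro e he
    have := Function.support_add f g he
    simpa [Finset.coe_union, Set.Finite.coe_toFinset] using this
  rw [div_eq_sum _ x hT,
    div_eq_sum f x (T := hf.toFinset ∪ hg.toFinset)
      (fun e he => Finset.mem_union_left _ (hf.mem_toFinset.2 he)),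
    div_eq_sum g x (T := hf.toFinset ∪ hg.toFinset)
      (fun e he => Finset.mem_union_right _ (hg.mem_toFinset.2 he)),
    ← Finset.sum_add_distrib]
  congr 1; ext e; simp [add_mul]

lemma div_single {G : Multigraph V E} (e : E) (c : ℤ) (x : V) :
    G.div (fun e' => if e' = e then c else 0) x = c * G.sgn e x := by
  rw [div_eq_sum _ x (single_support c)]
  simp

lemma div_update {G : Multigraph V E} {f : E → ℤ} (hfin : (Function.support f).Finite)
    (e : E) (c : ℤ) (x : V) :
    G.div (Function.update f e c) x = G.div f x + (c - f e) * G.sgn e x := by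
  have key : Function.update f e c = f + (fun e' => if e' = e then c - f e else 0) := by
    ext e'
    by_cases h : e' = e
    · subst h; simp
    · simp [Function.update_of_ne h, h]
  rw [key, div_add hfin ((Set.finite_singleton e).subset
    (by simpa using single_support (c - f e))), div_single]

lemma div_zero_flow {G : Multigraph V E} (x : V) : G.div (fun _ => 0) x = 0 := by
  unfold Multigraph.div
  simp
lemma dir_ne_zero {G : Multigraph V E} (e : E) (x y : V) : G.dir e x y ≠ 0 := by
  unfold Multigraph.dir; split <;> simp

lemma sgn_eq_one_iff {G : Multigraph V E} {e : E} {x : V} :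
    G.sgn e x = 1 ↔ G.fstE e = x ∧ G.sndE e ≠ x := by
  unfold Multigraph.sgn; split <;> split <;> simp_all

lemma sgn_eq_neg_one_iff {G : Multigraph V E} {e : E} {x : V} :
    G.sgn e x = -1 ↔ G.fstE e ≠ x ∧ G.sndE e = x := by
  unfold Multigraph.sgn; split <;> split <;> simp_all

lemma exists_step {G : Multigraph V E} {f : E → ℤ} {e : E} {x : V}
    (hcap : |f e| ≤ 1) (h : 0 < f e * G.sgn e x) :
    ∃ y, x ≠ y ∧ G.ends e = s(x, y) ∧ f e = G.dir e x y := by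
  have hcap' := abs_le.1 hcap
  rcases sgn_mem (G := G) (e := e) (x := x) with hs | hs | hs
  · obtain ⟨h1, h2⟩ := sgn_eq_one_iff.1 hs
    refine ⟨G.sndE e, fun hxy => h2 hxy.symm, ?_, ?_⟩
    · rw [← h1]; exact G.ends_eq_fstE_sndE e
    · have hf : f e = 1 := by rw [hs, mul_one] at h; omega
      rw [hf, Multigraph.dir, if_pos ⟨h1, rfl⟩]
  · rw [hs, mul_zero] at h; omega
  · obtain ⟨h1, h2⟩ := sgn_eq_neg_one_iff.1 hs
    refine ⟨G.fstE e, fun hxy => h1 hxy.symm, ?_, ?_⟩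
    · rw [← h2, Sym2.eq_swap]; exact G.ends_eq_fstE_sndE e
    · have hf : f e = -1 := by rw [hs] at h; omega
      have hne : ¬ (G.fstE e = x ∧ G.sndE e = G.fstE e) := fun ⟨hc, _⟩ => h1 hc
      rw [hf, Multigraph.dir, if_neg hne]

theorem extract {G : Multigraph V E} : ∀ (n : ℕ) (f : E → ℤ)
    (hfin : (Function.support f).Finite), hfin.toFinset.card ≤ n → (∀ e, |f e| ≤ 1) →
    ∀ (x v : V), (x = v ∨ 0 < G.div f x) → (∀ z, z ≠ v → 0 ≤ G.div f z) →
    ∃ (W : G.Walk x v) (g : E → ℤ), W.edges.Nodup ∧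
      (∀ e ∈ W.edges, f e ≠ 0 ∧ g e = 0) ∧ (∀ e, e ∉ W.edges → g e = f e) ∧
      ∀ z, G.div g z = G.div f z - (if z = x then 1 else 0) + (if z = v then 1 else 0) := by
  intro n
  induction n with
  | zero =>
    intro f hfin hcard hcap x v hx hv
    rcases hx with rfl | hpos
    · exact ⟨Walk.nil x, f, by simp [Walk.edges], by simp [Walk.edges],
        fun e _ => rfl, fun z => by ring⟩
    · exfalso
      have hT : hfin.toFinset = ∅ := Finset.card_eq_zero.1 (Nat.le_zero.1 hcard)
      have : G.div f x = 0 := by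
        rw [div_eq_sum f x (T := hfin.toFinset) (fun e he => hfin.mem_toFinset.2 he), hT]
        simp
      omega
  | succ n ih =>
    intro f hfin hcard hcap x v hx hv
    rcases hx with rfl | hpos
    · exact ⟨Walk.nil x, f, by simp [Walk.edges], by simp [Walk.edges],
        fun e _ => rfl, fun z => by ring⟩
    · have hsum : 0 < ∑ e ∈ hfin.toFinset, f e * G.sgn e x := by
        rw [← div_eq_sum f x (fun e he => hfin.mem_toFinset.2 he)]; exact hpos
      have hex : ∃ e ∈ hfin.toFinset, 0 < f e * G.sgn e x := by
        by_contra hco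
        push_neg at hco
        have : ∑ e ∈ hfin.toFinset, f e * G.sgn e x ≤ 0 :=
          Finset.sum_nonpos hco
        omega
      obtain ⟨e, heT, hepos⟩ := hex
      obtain ⟨y, hxy, he, hfe⟩ := exists_step (hcap e) hepos
      have hfene : f e ≠ 0 := by rw [hfe]; exact dir_ne_zero e x y
      set f₁ := Function.update f e 0 with hf₁def
      have hfin₁ : (Function.support f₁).Finite := by
        apply hfin.subset
        intro e' he'
        simp only [Function.mem_support, hf₁def] at he'
        by_cases h : e' = e
        · subst h; simp at he'
        · rw [Function.update_of_ne h] at he'; exact he'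
      have hf₁e : f₁ e = 0 := by simp [hf₁def]
      have hf₁ne : ∀ e', e' ≠ e → f₁ e' = f e' := fun e' h =>
        Function.update_of_ne h _ _
      have hdiv₁ : ∀ z, G.div f₁ z
          = G.div f z - (if z = x then 1 else 0) + (if z = y then 1 else 0) := by
        intro z
        rw [hf₁def, div_update hfin, zero_sub, neg_mul, hfe, dir_mul_sgn he hxy z]
        ring
      have hcard₁ : hfin₁.toFinset.card ≤ n := by
        have hsub : hfin₁.toFinset ⊆ hfin.toFinset.erase e := by
          intro e' he'
          have h1 : f₁ e' ≠ 0 := (hfin₁.mem_toFinset.1 he')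
          have h2 : e' ≠ e := fun hc => h1 (hc ▸ hf₁e)
          exact Finset.mem_erase.2 ⟨h2, hfin.mem_toFinset.2 (by
            rw [Function.mem_support, ← hf₁ne e' h2]; exact h1)⟩
        have := Finset.card_le_card hsub
        rw [Finset.card_erase_of_mem heT] at this
        omega
      have hcap₁ : ∀ e', |f₁ e'| ≤ 1 := by
        intro e'
        by_cases h : e' = e
        · subst h; simp [hf₁e]
        · rw [hf₁ne e' h]; exact hcap e'
      have hx₁ : y = v ∨ 0 < G.div f₁ y := by
        by_cases hyv : y = v
        · exact Or.inl hyv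
        · right
          rw [hdiv₁ y, if_neg (fun hc : y = x => hxy hc.symm), if_pos rfl]
          have := hv y hyv
          omega
      have hv₁ : ∀ z, z ≠ v → 0 ≤ G.div f₁ z := by
        intro z hz
        have h0 := hv z hz
        have h3 : z = x → 0 < G.div f z := fun h => by rw [h]; exact hpos
        rw [hdiv₁ z]
        by_cases hA : z = x
        · have h4 := h3 hA
          rw [if_pos hA]
          by_cases hB : z = y
          · rw [if_pos hB]; omega
          · rw [if_neg hB]; omega
        · rw [if_neg hA]
          by_cases hB : z = y
          · rw [if_pos hB]; omega
          · rw [if_neg hB]; omega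
      obtain ⟨W', g, hW'nd, hW'mem, hW'out, hW'div⟩ :=
        ih f₁ hfin₁ hcard₁ hcap₁ y v hx₁ hv₁
      have heW' : e ∉ W'.edges := fun hc => (hW'mem e hc).1 hf₁e
      refine ⟨Walk.cons e he W', g, ?_, ?_, ?_, ?_⟩
      · simp only [Walk.edges, List.nodup_cons]
        exact ⟨heW', hW'nd⟩
      · intro e' he'
        simp only [Walk.edges, List.mem_cons] at he'
        rcases he' with rfl | he'
        · refine ⟨hfene, ?_⟩
          rw [hW'out e' heW', hf₁e]
        · have h2 : e' ≠ e := fun hc => heW' (hc ▸ he')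
          exact ⟨fun hc => (hW'mem e' he').1 (hc ▸ hf₁ne e' h2), (hW'mem e' he').2⟩
      · intro e' he'
        simp only [Walk.edges, List.mem_cons] at he'
        push_neg at he'
        rw [hW'out e' he'.2, hf₁ne e' he'.1]
      · intro z
        rw [hW'div z, hdiv₁ z]
        ring
theorem flow_to_walks {G : Multigraph V E} : ∀ (m : ℕ) (f : E → ℤ)
    (hfin : (Function.support f).Finite), (∀ e, |f e| ≤ 1) → ∀ (u v : V), u ≠ v →
    G.div f u = m → (∀ z, z ≠ u → z ≠ v → G.div f z = 0) →
    ∃ W : Fin m → G.Walk u v, (∀ i, (W i).edges.Nodup) ∧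
      (∀ i, ∀ e ∈ (W i).edges, f e ≠ 0) ∧
      ∀ i j, i ≠ j → ∀ e, e ∈ (W i).edges → e ∉ (W j).edges := by
  intro m
  induction m with
  | zero =>
    intro f hfin hcap u v huv hdivu hdiv0
    exact ⟨Fin.elim0, fun i => i.elim0, fun i => i.elim0, fun i => i.elim0⟩
  | succ m ih =>
    intro f hfin hcap u v huv hdivu hdiv0
    have hx : u = v ∨ 0 < G.div f u := Or.inr (by
      rw [hdivu]; exact_mod_cast Nat.succ_pos m)
    have hv : ∀ z, z ≠ v → 0 ≤ G.div f z := by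
      intro z hz
      by_cases hzu : z = u
      · rw [hzu, hdivu]; positivity
      · rw [hdiv0 z hzu hz]
    obtain ⟨W₀, g, hnd₀, hmem₀, hout₀, hdivg⟩ :=
      extract hfin.toFinset.card f hfin le_rfl hcap u v hx hv
    have hfing : (Function.support g).Finite := by
      apply hfin.subset
      intro e he
      simp only [Function.mem_support] at he ⊢
      intro hfe
      apply he
      by_cases hW : e ∈ W₀.edges
      · exact (hmem₀ e hW).2
      · rw [hout₀ e hW]; exact hfe
    have hcapg : ∀ e, |g e| ≤ 1 := by
      intro e
      by_cases hW : e ∈ W₀.edges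
      · rw [(hmem₀ e hW).2]; norm_num
      · rw [hout₀ e hW]; exact hcap e
    have hdivgu : G.div g u = m := by
      rw [hdivg u, hdivu, if_pos rfl, if_neg huv]; push_cast; ring
    have hdivg0 : ∀ z, z ≠ u → z ≠ v → G.div g z = 0 := by
      intro z hzu hzv
      rw [hdivg z, hdiv0 z hzu hzv, if_neg hzu, if_neg hzv]; ring
    obtain ⟨W', hnd', hmem', hdisj'⟩ := ih g hfing hcapg u v huv hdivgu hdivg0
    have hgne : ∀ i, ∀ e ∈ (W' i).edges, f e ≠ 0 ∧ e ∉ W₀.edges := by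
      intro i e he
      have hg := hmem' i e he
      have heW₀ : e ∉ W₀.edges := fun hc => hg (hmem₀ e hc).2
      exact ⟨fun hc => hg (by rw [hout₀ e heW₀]; exact hc), heW₀⟩
    refine ⟨Fin.cons W₀ W', ?_, ?_, ?_⟩
    · intro i
      induction i using Fin.cases with
      | zero => simpa using hnd₀
      | succ i => simpa using hnd' i
    · intro i
      induction i using Fin.cases with
      | zero => simpa using fun e he => (hmem₀ e he).1
      | succ i => simpa using fun e he => (hgne i e he).1
    · intro i j hij
      induction i using Fin.cases with
      | zero =>
        induction j using Fin.cases with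
        | zero => exact absurd rfl hij
        | succ j =>
          intro e he
          simp only [Fin.cons_zero, Fin.cons_succ] at he ⊢
          exact fun hc => (hgne j e hc).2 he
      | succ i =>
        induction j using Fin.cases with
        | zero =>
          intro e he
          simp only [Fin.cons_zero, Fin.cons_succ] at he ⊢
          exact (hgne i e he).2
        | succ j =>
          intro e he
          simp only [Fin.cons_succ] at he ⊢
          exact hdisj' i j (fun hc => hij (by rw [hc])) e he

theorem flow_to_paths {G : Multigraph V E} (m : ℕ) (f : E → ℤ)
    (hfin : (Function.support f).Finite) (hcap : ∀ e, |f e| ≤ 1) (u v : V) (huv : u ≠ v)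
    (hdivu : G.div f u = m) (hdiv0 : ∀ z, z ≠ u → z ≠ v → G.div f z = 0) :
    G.HasEdgeDisjointPaths m u v := by
  obtain ⟨W, hnd, hmem, hdisj⟩ := flow_to_walks m f hfin hcap u v huv hdivu hdiv0
  choose P hP1 hP2 using fun i => Walk.exists_isPath (W i)
  refine ⟨P, hP1, ?_⟩
  intro i j hij e hei hej
  exact hdisj i j hij e (hP2 i e hei) (hP2 j e hej)
/-- Edge `e` crosses the set `S`. -/
def Crosses (G : Multigraph V E) (S : Set V) (e : E) : Prop :=
  ∃ x y, G.ends e = s(x, y) ∧ x ∈ S ∧ y ∉ S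

/-- Residual relation of a flow: one more unit can be pushed from `x` to `y`. -/
def Res (G : Multigraph V E) (f : E → ℤ) (x y : V) : Prop :=
  ∃ e, G.ends e = s(x, y) ∧ |f e + G.dir e x y| ≤ 1

lemma dir_cases {G : Multigraph V E} (e : E) (x y : V) :
    G.dir e x y = 1 ∨ G.dir e x y = -1 := by
  unfold Multigraph.dir; split <;> simp

private lemma getLastD_append_cons {α : Type*} :
    ∀ (s : List α) (a : α) (t : List α) (d : α), (s ++ a :: t).getLastD d = t.getLastD a := by
  intro s
  induction s with
  | nil => intro a t d; cases t <;> simp [List.getLastD]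
  | cons x s' ih => intro a t d; rw [List.cons_append, List.getLastD_cons, ih]

private lemma getLast_cons_eq_getLastD {α : Type*} :
    ∀ (l : List α) (a : α), (a :: l).getLast (List.cons_ne_nil a l) = l.getLastD a := by
  intro l
  induction l with
  | nil => intro a; simp
  | cons b l' ih => intro a; rw [List.getLast_cons_cons, ih, List.getLastD_cons]

lemma nodup_chain {α : Type*} {r : α → α → Prop} : ∀ (n : ℕ) (l : List α) (a : α),
    l.length ≤ n → List.Chain r a l →
    ∃ l', List.Chain r a l' ∧ l'.getLastD a = l.getLastD a ∧ (a :: l').Nodup ∧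
      ∀ x ∈ l', x ∈ l := by
  intro n
  induction n with
  | zero =>
    intro l a hlen _
    rw [List.length_eq_zero_iff.1 (Nat.le_zero.1 hlen)]
    exact ⟨[], List.Chain.nil, rfl, List.nodup_singleton a, by simp⟩
  | succ n ih =>
    intro l a hlen hchain
    cases l with
    | nil => exact ⟨[], List.Chain.nil, rfl, List.nodup_singleton a, by simp⟩
    | cons b l₁ =>
      by_cases hal : a ∈ b :: l₁
      · obtain ⟨s, t, hst⟩ := List.append_of_mem hal
        rw [hst] at hchain
        have hchain' : List.Chain r a t := (List.isChain_cons_split.1 hchain).2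
        have hlen' : t.length ≤ n := by
          have h5 : l₁.length + 1 = s.length + (t.length + 1) := by
            simpa using congrArg List.length hst
          simp only [List.length_cons] at hlen
          omega
        obtain ⟨l', h1, h2, h3, h4⟩ := ih t a hlen' hchain'
        refine ⟨l', h1, ?_, h3, ?_⟩
        · rw [h2, hst, getLastD_append_cons]
        · intro x hx
          rw [hst]
          exact List.mem_append_right s (List.mem_cons_of_mem a (h4 x hx))
      · rw [List.Chain, List.isChain_cons_cons] at hchain
        obtain ⟨l', h1, h2, h3, h4⟩ := ih l₁ b (by simpa using hlen) hchain.2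
        refine ⟨b :: l', List.isChain_cons_cons.2 ⟨hchain.1, h1⟩, ?_, ?_, ?_⟩
        · rw [List.getLastD_cons, List.getLastD_cons, h2]
        · refine List.nodup_cons.2 ⟨?_, h3⟩
          intro hc
          apply hal
          rcases List.mem_cons.1 hc with rfl | hc'
          · exact List.mem_cons_self
          · exact List.mem_cons_of_mem b (h4 a hc')
        · intro x hx
          rcases List.mem_cons.1 hx with rfl | hx'
          · exact List.mem_cons_self
          · exact List.mem_cons_of_mem b (h4 x hx')

lemma augment {G : Multigraph V E} {f : E → ℤ} (hcap : ∀ e, |f e| ≤ 1) :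
    ∀ (l : List V) (a : V), List.Chain (G.Res f) a l → (a :: l).Nodup →
    ∃ g : E → ℤ, (∀ e, |g e| ≤ 1) ∧ {e | g e ≠ f e}.Finite ∧
      (∀ e, g e ≠ f e → ∃ x y, G.ends e = s(x, y) ∧ x ∈ a :: l ∧ y ∈ a :: l ∧ x ≠ y) ∧
      ((Function.support f).Finite → ∀ z, G.div g z =
        G.div f z + (if z = a then 1 else 0) - (if z = l.getLastD a then 1 else 0)) := by
  intro l
  induction l with
  | nil =>
    intro a _ _
    exact ⟨f, hcap, by simp, fun e he => absurd rfl he, fun _ z => by rw [List.getLastD_nil, add_sub_cancel_right]⟩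
  | cons b l₂ ih =>
    intro a hchain hnodup
    rw [List.Chain, List.isChain_cons_cons] at hchain
    obtain ⟨hres, hchain₂⟩ := hchain
    have hnodup₂ : (b :: l₂).Nodup := (List.nodup_cons.1 hnodup).2
    have hanotin : a ∉ b :: l₂ := (List.nodup_cons.1 hnodup).1
    obtain ⟨g₁, hcap₁, hfin₁, hch₁, hdiv₁⟩ := ih b hchain₂ hnodup₂
    obtain ⟨e, he, hrescap⟩ := hres
    have hab : a ≠ b := by
      intro hc; exact hanotin (hc ▸ List.mem_cons_self (a := b) (l := l₂))
    have hg₁e : g₁ e = f e := by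
      by_contra hc
      obtain ⟨x, y, hxy, hx, hy, -⟩ := hch₁ e hc
      rw [he, Sym2.eq, Sym2.rel_iff'] at hxy
      rcases hxy with h | h
      · apply hanotin
        have : a = x := congrArg Prod.fst h
        exact this ▸ hx
      · apply hanotin
        have : a = y := congrArg Prod.fst h
        exact this ▸ hy
    refine ⟨Function.update g₁ e (f e + G.dir e a b), ?_, ?_, ?_, ?_⟩
    · intro e'
      by_cases h : e' = e
      · subst h; simpa using hrescap
      · rw [Function.update_of_ne h]; exact hcap₁ e'
    · apply (hfin₁.insert e).subset
      intro e' he'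
      simp only [Set.mem_setOf_eq] at he'
      by_cases h : e' = e
      · subst h; exact Set.mem_insert _ _
      · rw [Function.update_of_ne h] at he'
        exact Set.mem_insert_of_mem e he'
    · intro e' he'
      by_cases h : e' = e
      · subst h
        exact ⟨a, b, he, List.mem_cons_self,
          List.mem_cons_of_mem a (List.mem_cons_self (a := b) (l := l₂)), hab⟩
      · rw [Function.update_of_ne h] at he'
        obtain ⟨x, y, h1, h2, h3, h4⟩ := hch₁ e' he'
        exact ⟨x, y, h1, List.mem_cons_of_mem a h2, List.mem_cons_of_mem a h3, h4⟩
    · intro hfinf z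
      have hfing₁ : (Function.support g₁).Finite := by
        apply (hfinf.union hfin₁).subset
        intro e' he'
        by_cases h : g₁ e' = f e'
        · left; simpa [Function.mem_support, h] using he'
        · right; exact h
      rw [div_update hfing₁, hg₁e, add_sub_cancel_left, dir_mul_sgn he hab z,
        hdiv₁ hfinf z, List.getLastD_cons]
      ring
lemma crosses_of_mem {G : Multigraph V E} {S : Set V} {e : E}
    (h : G.Crosses S e) : G.fstE e ∈ S ↔ G.sndE e ∉ S := by
  obtain ⟨x, y, he, hx, hy⟩ := h
  rcases ends_cases he with ⟨h1, h2⟩ | ⟨h1, h2⟩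
  · rw [h1, h2]; exact ⟨fun _ => hy, fun _ => hx⟩
  · rw [h1, h2]; constructor
    · intro hyS; exact absurd hyS hy
    · intro hns; exact absurd hx hns

theorem menger_hard {G : Multigraph V E} (k : ℕ) (u v : V) (huv : u ≠ v)
    (hnocut : ¬ ∃ S : Set V, u ∈ S ∧ v ∉ S ∧
      ∃ C : Finset E, (∀ e, G.Crosses S e → e ∈ C) ∧ C.card ≤ k) :
    G.HasEdgeDisjointPaths (k + 1) u v := by
  have key : ∀ m : ℕ, m ≤ k + 1 → ∃ f : E → ℤ, (Function.support f).Finite ∧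
      (∀ e, |f e| ≤ 1) ∧ G.div f u = m ∧ ∀ z, z ≠ u → z ≠ v → G.div f z = 0 := by
    intro m
    induction m with
    | zero =>
      intro _
      exact ⟨fun _ => 0, by simp, by simp, by simpa using div_zero_flow u,
        fun z _ _ => div_zero_flow z⟩
    | succ m ihm =>
      intro hm
      obtain ⟨f, hfin, hcap, hdivu, hdiv0⟩ := ihm (by omega)
      by_cases hvS : Relation.ReflTransGen (G.Res f) u v
      · -- augment
        obtain ⟨l, hchain, hlast⟩ := List.exists_isChain_cons_of_relationReflTransGen hvS
        rw [getLast_cons_eq_getLastD] at hlast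
        obtain ⟨l₂, hchain₂, hlast₂, hnodup₂, -⟩ :=
          nodup_chain l.length l u le_rfl hchain
        obtain ⟨g, hcapg, hchg, -, hdivg⟩ := augment hcap l₂ u hchain₂ hnodup₂
        refine ⟨g, ?_, hcapg, ?_, ?_⟩
        · apply (hfin.union hchg).subset
          intro e he
          by_cases h : g e = f e
          · left; simpa [Function.mem_support, h] using he
          · right; exact h
        · rw [hdivg hfin u, hdivu, if_pos rfl, hlast₂, hlast, if_neg huv]
          push_cast; ring
        · intro z hzu hzv
          rw [hdivg hfin z, hdiv0 z hzu hzv, if_neg hzu, hlast₂, hlast, if_neg hzv]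
          ring
      · -- build a cut, contradiction
        exfalso
        apply hnocut
        set S : Set V := {z | Relation.ReflTransGen (G.Res f) u z} with hSdef
        have huS : u ∈ S := Relation.ReflTransGen.refl
        have hsat : ∀ e x y, G.ends e = s(x, y) → x ∈ S → y ∉ S →
            f e = G.dir e x y := by
          intro e x y he hx hy
          have hnres : ¬ G.Res f x y := by
            intro hres
            exact hy (Relation.ReflTransGen.tail hx hres)
          have h1 : ¬ |f e + G.dir e x y| ≤ 1 := fun hc => hnres ⟨e, he, hc⟩
          have h2 := abs_le.1 (hcap e)
          rcases dir_cases (G := G) e x y with h3 | h3 <;>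
            · rw [h3] at h1 ⊢
              rw [abs_le] at h1
              push_neg at h1
              omega
        set T : Finset E := hfin.toFinset with hTdef
        set C : Finset E := T.filter (fun e => G.Crosses S e) with hCdef
        have hcross_mem : ∀ e, G.Crosses S e → e ∈ C := by
          intro e hc
          obtain ⟨x, y, he, hx, hy⟩ := hc
          have hfe : f e = G.dir e x y := hsat e x y he hx hy
          have hne : f e ≠ 0 := by
            rw [hfe]; exact dir_ne_zero e x y
          rw [hCdef]
          exact Finset.mem_filter.2 ⟨hfin.mem_toFinset.2 hne, ⟨x, y, he, hx, hy⟩⟩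
        refine ⟨S, huS, hvS, C, hcross_mem, ?_⟩
        -- now count : C.card = m ≤ k
        set A : Finset V := (T.image G.fstE ∪ T.image G.sndE) ∪ {u} with hAdef
        set F : Finset V := A.filter (fun x => x ∈ S) with hFdef
        have hstep1 : ∑ x ∈ F, G.div f x = m := by
          rw [Finset.sum_eq_single_of_mem u]
          · exact hdivu
          · rw [hFdef]
            exact Finset.mem_filter.2 ⟨by simp [hAdef], huS⟩
          · intro x hxF hxu
            apply hdiv0 x hxu
            intro hc
            exact hvS (hc ▸ (Finset.mem_filter.1 hxF).2)
        have hstep2 : ∑ x ∈ F, G.div f x = ∑ e ∈ T, f e * ∑ x ∈ F, G.sgn e x := by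
          have : ∀ x ∈ F, G.div f x = ∑ e ∈ T, f e * G.sgn e x := fun x _ =>
            div_eq_sum f x (fun e he => hfin.mem_toFinset.2 he)
          rw [Finset.sum_congr rfl this, Finset.sum_comm]
          exact Finset.sum_congr rfl (fun e _ => (Finset.mul_sum _ _ _).symm)
        have hstep3 : ∀ e ∈ T, ∑ x ∈ F, G.sgn e x =
            (if G.fstE e ∈ S then 1 else 0) - (if G.sndE e ∈ S then 1 else 0) := by
          intro e heT
          unfold Multigraph.sgn
          rw [Finset.sum_sub_distrib, Finset.sum_ite_eq, Finset.sum_ite_eq]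
          have h1 : G.fstE e ∈ A := by
            simp only [hAdef, Finset.mem_union]
            exact Or.inl (Or.inl (Finset.mem_image_of_mem _ heT))
          have h2 : G.sndE e ∈ A := by
            simp only [hAdef, Finset.mem_union]
            exact Or.inl (Or.inr (Finset.mem_image_of_mem _ heT))
          rw [hFdef]
          by_cases hf1 : G.fstE e ∈ S <;> by_cases hf2 : G.sndE e ∈ S <;>
            simp [Finset.mem_filter, h1, h2, hf1, hf2]
        have hstep4 : ∀ e ∈ T, f e * ∑ x ∈ F, G.sgn e x =
            (if G.Crosses S e then 1 else 0) := by
          intro e heT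
          rw [hstep3 e heT]
          by_cases hf1 : G.fstE e ∈ S <;> by_cases hf2 : G.sndE e ∈ S
          · rw [if_pos hf1, if_pos hf2, if_neg]
            · ring
            · intro hc
              rcases crosses_of_mem hc with ⟨h1, -⟩
              exact (h1 hf1) hf2
          · have hcr : G.Crosses S e :=
              ⟨G.fstE e, G.sndE e, G.ends_eq_fstE_sndE e, hf1, hf2⟩
            rw [if_pos hf1, if_neg hf2, if_pos hcr]
            have hfe : f e = G.dir e (G.fstE e) (G.sndE e) :=
              hsat e _ _ (G.ends_eq_fstE_sndE e) hf1 hf2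
            have hd : G.dir e (G.fstE e) (G.sndE e) = 1 := by
              unfold Multigraph.dir
              rw [if_pos ⟨rfl, rfl⟩]
            rw [hfe, hd]; ring
          · have hcr : G.Crosses S e :=
              ⟨G.sndE e, G.fstE e, by rw [Sym2.eq_swap]; exact G.ends_eq_fstE_sndE e,
                hf2, hf1⟩
            rw [if_neg hf1, if_pos hf2, if_pos hcr]
            have hfe : f e = G.dir e (G.sndE e) (G.fstE e) :=
              hsat e _ _ (by rw [Sym2.eq_swap]; exact G.ends_eq_fstE_sndE e) hf2 hf1
            have hd : G.dir e (G.sndE e) (G.fstE e) = -1 := by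
              unfold Multigraph.dir
              rw [if_neg]
              rintro ⟨h1, -⟩
              exact hf1 (h1 ▸ hf2)
            rw [hfe, hd]; ring
          · rw [if_neg hf1, if_neg hf2, if_neg]
            · ring
            · intro hc
              rcases crosses_of_mem hc with ⟨-, h1⟩
              exact hf1 (h1 hf2)
        have hcount : (m : ℤ) = C.card := by
          rw [← hstep1, hstep2, Finset.sum_congr rfl hstep4, hCdef]
          simp [Finset.sum_boole]
        omega
  obtain ⟨f, hfin, hcap, hdivu, hdiv0⟩ := key (k + 1) le_rfl
  exact flow_to_paths (k + 1) f hfin hcap u v huv hdivu hdiv0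
lemma Walk.exists_crossing {G : Multigraph V E} {S : Set V} :
    ∀ {a b : V} (W : G.Walk a b), a ∈ S → b ∉ S → ∃ e ∈ W.edges, G.Crosses S e := by
  intro a b W
  induction W with
  | nil w => intro h1 h2; exact absurd h1 h2
  | @cons a c w e he p ih =>
    intro h1 h2
    by_cases hc : c ∈ S
    · obtain ⟨e', h3, h4⟩ := ih hc h2
      exact ⟨e', List.mem_cons_of_mem _ h3, h4⟩
    · exact ⟨e, List.mem_cons_self, a, c, he, h1, hc⟩

lemma no_disjoint_walks {G : Multigraph V E} {S : Set V} {C : Finset E}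
    (hC : ∀ e, G.Crosses S e → e ∈ C) {u v : V} {m : ℕ} (hu : u ∈ S) (hv : v ∉ S)
    (hm : C.card < m) : ¬ G.HasEdgeDisjointPaths m u v := by
  rintro ⟨W, -, hdisj⟩
  choose c hc1 hc2 using fun i => Walk.exists_crossing (W i) hu hv
  have hinj : Function.Injective (fun i : Fin m => (⟨c i, hC _ (hc2 i)⟩ : {x // x ∈ C})) := by
    intro i j hij
    by_contra hne
    have hcc : c i = c j := congrArg Subtype.val hij
    exact hdisj i j hne (c i) (hc1 i) (hcc ▸ hc1 j)
  have hle := Fintype.card_le_of_injective _ hinj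
  rw [Fintype.card_coe, Fintype.card_fin] at hle
  omega

lemma crosses_compl {G : Multigraph V E} {S : Set V} {e : E} :
    G.Crosses Sᶜ e ↔ G.Crosses S e := by
  constructor
  · rintro ⟨x, y, he, hx, hy⟩
    exact ⟨y, x, by rw [Sym2.eq_swap]; exact he, not_not.1 hy, hx⟩
  · rintro ⟨x, y, he, hx, hy⟩
    exact ⟨y, x, by rw [Sym2.eq_swap]; exact he, hy, fun hc => hc hx⟩

/-- Mapping a walk to a multigraph on a quotiented vertex set. -/
lemma Walk.exists_mapV {W' : Type} {G : Multigraph V E} (φ : V → W')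
    (H : Multigraph W' E) (hφ : ∀ e, H.ends e = (G.ends e).map φ) :
    ∀ {a b : V} (p : G.Walk a b), ∃ q : H.Walk (φ a) (φ b), q.edges = p.edges := by
  intro a b p
  induction p with
  | nil w => exact ⟨Walk.nil (φ w), rfl⟩
  | @cons a c w e he p ih =>
    obtain ⟨q, hq⟩ := ih
    refine ⟨Walk.cons e ?_ q, ?_⟩
    · rw [hφ, he, Sym2.map_pair_eq]
    · simp only [Walk.edges, hq]

/-- Mapping a walk avoiding `e₀` into the edge-deleted multigraph. -/
lemma Walk.exists_mapDel {G : Multigraph V E} {e₀ : E} :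
    ∀ {a b : V} (p : G.Walk a b), e₀ ∉ p.edges →
    ∃ q : (G.deleteEdge e₀).Walk a b, q.support = p.support ∧
      ∀ e', e' ∈ q.edges → e'.1 ∈ p.edges := by
  intro a b p
  induction p with
  | nil w => intro _; exact ⟨Walk.nil w, rfl, by simp [Walk.edges]⟩
  | @cons a c w e he p ih =>
    intro h
    simp only [Walk.edges, List.mem_cons] at h
    push_neg at h
    obtain ⟨q, hq1, hq2⟩ := ih h.2
    refine ⟨Walk.cons ⟨e, fun hc => h.1 hc.symm⟩ he q, ?_, ?_⟩
    · simp only [Walk.support, hq1]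
    · intro e' he'
      simp only [Walk.edges, List.mem_cons] at he' ⊢
      rcases he' with rfl | he'
      · exact Or.inl rfl
      · exact Or.inr (hq2 e' he')

lemma walk_eq_of_isEmpty {G : Multigraph V E} (hE : ¬ Nonempty E) :
    ∀ {a b : V}, G.Walk a b → a = b := by
  intro a b p
  induction p with
  | nil w => rfl
  | cons e he p ih => exact absurd ⟨e⟩ hE

lemma get_cut {G : Multigraph V E} (k : ℕ) (x y : V) (hxy : x ≠ y)
    (hnp : ¬ G.HasEdgeDisjointPaths (k + 1) x y) :
    ∃ S : Set V, x ∈ S ∧ y ∉ S ∧ ∃ C : Finset E,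
      (∀ e, G.Crosses S e → e ∈ C) ∧ C.card ≤ k := by
  by_contra h
  exact hnp (menger_hard k x y hxy h)

end Multigraph


open Multigraph

/-- If `G` is an edge-minimal, `k`-edge-connected multigraph,
then the quotient `G^k` by `R^(k+1)` has more than one vertex and is exactly
`k`-edge-connected. -/
theorem quotientGraph_exactlyEdgeConnected {V E : Type} (G : Multigraph V E)
    (k : ℕ) (hG : G.EdgeMinimal k) :
    (G.quotientGraph k).ExactlyEdgeConnected k := by
  classical
  obtain ⟨⟨⟨a₀, b₀, hab₀⟩, hconn⟩, hmin⟩ := hG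
  -- Step A : find a pair with no k+1 edge-disjoint paths
  have stepA : ∃ u₀ v₀ : V, u₀ ≠ v₀ ∧ ¬ G.HasEdgeDisjointPaths (k + 1) u₀ v₀ := by
    by_cases hE : Nonempty E
    · obtain ⟨e₀⟩ := hE
      have h := hmin e₀
      rw [Multigraph.EdgeConnected] at h
      push_neg at h
      obtain ⟨u₀, v₀, huv, hdel⟩ := h ⟨a₀, b₀, hab₀⟩
      refine ⟨u₀, v₀, huv, ?_⟩
      rintro ⟨W, hW1, hW2⟩
      apply hdel
      set i₀ : Fin (k + 1) :=
        if h : ∃ i, e₀ ∈ (W i).edges then h.choose else ⟨0, Nat.succ_pos k⟩ with hi₀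
      have havoid : ∀ i, i ≠ i₀ → e₀ ∉ (W i).edges := by
        intro i hne hmem
        by_cases h : ∃ i, e₀ ∈ (W i).edges
        · have h2 : e₀ ∈ (W i₀).edges := by
            rw [hi₀, dif_pos h]; exact h.choose_spec
          exact hW2 i i₀ hne e₀ hmem h2
        · exact h ⟨i, hmem⟩
      have hw : ∀ j : Fin k, ∃ q : (G.deleteEdge e₀).Walk u₀ v₀,
          q.support = (W (i₀.succAbove j)).support ∧
          ∀ e', e' ∈ q.edges → e'.1 ∈ (W (i₀.succAbove j)).edges :=
        fun j => Walk.exists_mapDel _ (havoid _ (Fin.succAbove_ne i₀ j))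
      choose Q hQ1 hQ2 using hw
      refine ⟨Q, ?_, ?_⟩
      · intro j
        unfold Multigraph.Walk.IsPath
        rw [hQ1 j]
        exact hW1 _
      · intro i j hij e' he1 he2
        have h1 := hQ2 i e' he1
        have h2 := hQ2 j e' he2
        exact hW2 _ _ (fun hc => hij (Fin.succAbove_right_injective hc)) e'.1 h1 h2
    · refine ⟨a₀, b₀, hab₀, ?_⟩
      rintro ⟨W, -, -⟩
      exact hab₀ (walk_eq_of_isEmpty hE (W ⟨0, Nat.succ_pos k⟩))
  obtain ⟨u₀, v₀, huv₀, hnp₀⟩ := stepA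
  -- Invariance of cut sides under the equivalence relation
  have class_invariant : ∀ (S : Set V) (C : Finset E), (∀ e, G.Crosses S e → e ∈ C) →
      C.card ≤ k → ∀ x y, Relation.EqvGen (G.Rel (k + 1)) x y → (x ∈ S ↔ y ∈ S) := by
    intro S C hC hcard x y h
    induction h with
    | rel x y hrel =>
      rcases hrel with rfl | hpaths
      · exact Iff.rfl
      · constructor
        · intro hx
          by_contra hy
          exact no_disjoint_walks hC hx hy (by omega) hpaths
        · intro hy
          by_contra hx
          exact no_disjoint_walks (S := Sᶜ) (fun e hc => hC e (crosses_compl.1 hc))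
            hx (fun hc => hc hy) (by omega) hpaths
    | refl x => exact Iff.rfl
    | symm x y _ ih => exact ih.symm
    | trans x y z _ _ ih1 ih2 => exact ih1.trans ih2
  obtain ⟨S₀, hu₀S, hv₀S, C₀, hC₀, hcard₀⟩ := get_cut k u₀ v₀ huv₀ hnp₀
  have hne₀ : (Quotient.mk (Relation.EqvGen.setoid (G.Rel (k + 1))) u₀)
      ≠ (Quotient.mk (Relation.EqvGen.setoid (G.Rel (k + 1))) v₀) := by
    intro h
    exact hv₀S ((class_invariant S₀ C₀ hC₀ hcard₀ u₀ v₀ (Quotient.exact h)).1 hu₀S)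
  refine ⟨⟨_, _, hne₀⟩, ?_⟩
  intro A B hAB
  obtain ⟨a, rfl⟩ := Quotient.exists_rep A
  obtain ⟨b, rfl⟩ := Quotient.exists_rep B
  have hab : a ≠ b := fun h => hAB (congrArg _ h)
  have hnub : ¬ Relation.EqvGen (G.Rel (k + 1)) a b := fun h => hAB (Quotient.sound h)
  have hnp : ¬ G.HasEdgeDisjointPaths (k + 1) a b :=
    fun h => hnub (Relation.EqvGen.rel _ _ (Or.inr h))
  constructor
  · -- k edge-disjoint paths in the quotient
    obtain ⟨W, hW1, hW2⟩ := hconn a b hab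
    have hmap : ∀ i : Fin k, ∃ q : (G.quotientGraph k).Walk
        (Quotient.mk (Relation.EqvGen.setoid (G.Rel (k + 1))) a)
        (Quotient.mk (Relation.EqvGen.setoid (G.Rel (k + 1))) b),
        q.edges = (W i).edges :=
      fun i => Walk.exists_mapV _ _ (fun _ => rfl) (W i)
    choose Q hQ using hmap
    have hpath : ∀ i, ∃ P : (G.quotientGraph k).Walk
        (Quotient.mk (Relation.EqvGen.setoid (G.Rel (k + 1))) a)
        (Quotient.mk (Relation.EqvGen.setoid (G.Rel (k + 1))) b),
        P.IsPath ∧ ∀ e ∈ P.edges, e ∈ (Q i).edges :=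
      fun i => Walk.exists_isPath (Q i)
    choose P hP1 hP2 using hpath
    refine ⟨P, hP1, ?_⟩
    intro i j hij e he1 he2
    have h1 : e ∈ (W i).edges := by rw [← hQ i]; exact hP2 i e he1
    have h2 : e ∈ (W j).edges := by rw [← hQ j]; exact hP2 j e he2
    exact hW2 i j hij e h1 h2
  · -- no k+1 edge-disjoint paths in the quotient
    obtain ⟨S, haS, hbS, C, hC, hcard⟩ := get_cut k a b hab hnp
    set S' : Set (Quotient (Relation.EqvGen.setoid (G.Rel (k + 1)))) :=
      fun c => Quotient.lift (· ∈ S)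
        (fun x y h => propext (class_invariant S C hC hcard x y h)) c with hS'def
    have hC' : ∀ e, (G.quotientGraph k).Crosses S' e → e ∈ C := by
      intro e hc
      obtain ⟨X, Y, he, hX, hY⟩ := hc
      obtain ⟨p, hp⟩ := Sym2.exists_pair (G.ends e)
      have hmapped : s(Quotient.mk (Relation.EqvGen.setoid (G.Rel (k + 1))) p.1,
          Quotient.mk (Relation.EqvGen.setoid (G.Rel (k + 1))) p.2) = s(X, Y) := by
        rw [← Sym2.map_pair_eq, ← hp]
        exact he
      rw [Sym2.eq, Sym2.rel_iff'] at hmapped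
      rcases hmapped with h | h
      · have h1 : X = Quotient.mk _ p.1 := (congrArg Prod.fst h).symm
        have h2 : Y = Quotient.mk _ p.2 := (congrArg Prod.snd h).symm
        apply hC
        refine ⟨p.1, p.2, hp, ?_, ?_⟩
        · rw [h1] at hX; exact hX
        · rw [h2] at hY; exact hY
      · have h1 : X = Quotient.mk _ p.2 := (congrArg Prod.snd h).symm
        have h2 : Y = Quotient.mk _ p.1 := (congrArg Prod.fst h).symm
        apply hC
        refine ⟨p.2, p.1, by rw [Sym2.eq_swap]; exact hp, ?_, ?_⟩
        · rw [h1] at hX; exact hX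
        · rw [h2] at hY; exact hY
    exact no_disjoint_walks hC' haS hbS (by omega)
end
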